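/- arXiv:1512.02280 — 4 statements merged into one kernel-verified Lean document; each statement's English description precedes it below -/
import Mathlib

section
/- Let N be a binomial random variable with parameters (n, p). For every r ≥ 2 there exists a constant C_r depending only on r such that E[N^r · 1_{N ≥ 2}] ≤ C_r · max((np)^r, (np)^2). -/
open Finset Real

lemma aux_pow_self_le (k : ℕ) : (k : ℝ) ^ k ≤ 3 ^ k * k.factorial := by
  have h1 : (k : ℝ) ^ k / k.factorial ≤ Real.exp k := by
    calc (k : ℝ) ^ k / k.factorial
        ≤ ∑ i ∈ range (k + 1), (k : ℝ) ^ i / i.factorial := by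
          exact Finset.single_le_sum (f := fun i => (k : ℝ) ^ i / (i.factorial : ℝ))
            (fun i _ => by positivity) (self_mem_range_succ k)
      _ ≤ Real.exp k := Real.sum_le_exp_of_nonneg (by positivity) _
  have h2 : Real.exp (k : ℝ) ≤ 3 ^ k := by
    rw [← Real.exp_one_pow]
    exact pow_le_pow_left₀ (Real.exp_pos 1).le (by linarith [Real.exp_one_lt_d9]) k
  have hf : (0:ℝ) < k.factorial := by exact_mod_cast k.factorial_pos
  calc (k:ℝ) ^ k = ((k:ℝ)^k / k.factorial) * k.factorial := by field_simp
    _ ≤ (3:ℝ)^k * k.factorial := by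
        apply mul_le_mul_of_nonneg_right (h1.trans h2) hf.le

lemma aux_two_pow (k : ℕ) : (2:ℝ) ^ k ≤ 2 * k.factorial := by
  have : 2 ^ k ≤ 2 * k.factorial := by
    induction k with
    | zero => simp
    | succ n ih =>
      rcases Nat.eq_zero_or_pos n with h | h
      · subst h; simp [Nat.factorial]
      · calc 2 ^ (n+1) = 2 * 2^n := by ring
          _ ≤ 2 * (2 * n.factorial) := by omega
          _ ≤ 2 * ((n+1) * n.factorial) := by
              have : 2 ≤ n + 1 := by omega
              nlinarith [n.factorial_pos]
          _ = 2 * (n+1).factorial := by rw [Nat.factorial_succ]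
  calc (2:ℝ)^k = ((2^k : ℕ) : ℝ) := by push_cast; ring
    _ ≤ ((2 * k.factorial : ℕ) : ℝ) := by exact_mod_cast this
    _ = 2 * k.factorial := by push_cast; ring

/-- For a binomial random variable `N ~ Bin(n, p)` and every real `r ≥ 2`
there is a constant `C_r` (depending only on `r`) with
`E[N^r · 1_{N ≥ 2}] ≤ C_r · max((np)^r, (np)^2)`. -/
theorem binomial_moment_bound (r : ℝ) (hr : 2 ≤ r) :
    ∃ C : ℝ, 0 < C ∧
      ∀ (n : ℕ) (p : ℝ), 0 ≤ p → p ≤ 1 →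
        (∑ k ∈ Finset.range (n + 1),
            (n.choose k : ℝ) * p ^ k * (1 - p) ^ (n - k) *
              (if 2 ≤ k then (k : ℝ) ^ r else 0))
          ≤ C * max (((n : ℝ) * p) ^ r) (((n : ℝ) * p) ^ (2 : ℕ)) := by
  have hr0 : (0:ℝ) ≤ r := by linarith
  set m : ℕ := ⌈r⌉₊ with hmdef
  have hrm : r ≤ (m : ℝ) := Nat.le_ceil r
  have hBsum : Summable (fun k : ℕ => (k:ℝ) ^ m * (1/2:ℝ) ^ k) :=
    summable_pow_mul_geometric_of_norm_lt_one m (by rw [Real.norm_eq_abs, abs_of_nonneg (by norm_num : (0:ℝ) ≤ 1/2)]; norm_num)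
  set B : ℝ := ∑' k : ℕ, (k:ℝ) ^ m * (1/2:ℝ) ^ k with hBdef
  have hB0 : 0 ≤ B := tsum_nonneg (fun k => by positivity)
  have hsumB : ∀ n : ℕ, ∑ k ∈ Finset.range (n+1), (k:ℝ) ^ m * (1/2:ℝ) ^ k ≤ B :=
    fun n => Summable.sum_le_tsum _ (fun i _ => by positivity) hBsum
  have h6r : (0:ℝ) < (6:ℝ) ^ r := Real.rpow_pos_of_pos (by norm_num) r
  refine ⟨2 * B + (6:ℝ) ^ r + 1, by linarith, ?_⟩
  intro n p hp0 hp1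
  set x : ℝ := (n:ℝ) * p with hxdef
  have hx0 : 0 ≤ x := mul_nonneg (Nat.cast_nonneg n) hp0
  set C : ℝ := 2 * B + (6:ℝ) ^ r + 1 with hCdef
  have hC0 : 0 < C := by rw [hCdef]; linarith
  -- termwise generic facts
  have hw_nonneg : ∀ k, 0 ≤ (n.choose k : ℝ) * p ^ k * (1 - p) ^ (n - k) := by
    intro k
    have : (0:ℝ) ≤ 1 - p := by linarith
    positivity
  have hw_le : ∀ k, (n.choose k : ℝ) * p ^ k * (1 - p) ^ (n - k) ≤ x ^ k / k.factorial := by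
    intro k
    have h1 : (n.choose k : ℝ) ≤ (n:ℝ) ^ k / k.factorial := by
      have := Nat.choose_le_pow_div (α := ℝ) k n
      push_cast at this ⊢
      exact this
    have h2 : (1 - p) ^ (n - k) ≤ 1 :=
      pow_le_one₀ (by linarith) (by linarith)
    calc (n.choose k : ℝ) * p ^ k * (1 - p) ^ (n - k)
        ≤ (n.choose k : ℝ) * p ^ k * 1 := by
          apply mul_le_mul_of_nonneg_left h2
          positivity
      _ = (n.choose k : ℝ) * p ^ k := by ring
      _ ≤ ((n:ℝ) ^ k / k.factorial) * p ^ k := by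
          apply mul_le_mul_of_nonneg_right h1 (by positivity)
      _ = x ^ k / k.factorial := by rw [hxdef, mul_pow]; ring
  have hkr_le : ∀ k : ℕ, 2 ≤ k → (k:ℝ) ^ r ≤ (k:ℝ) ^ m := by
    intro k hk
    rw [← Real.rpow_natCast (k:ℝ) m]
    exact Real.rpow_le_rpow_of_exponent_le (by exact_mod_cast Nat.one_le_iff_ne_zero.mpr (by omega)) hrm
  have hkr_nonneg : ∀ k : ℕ, 0 ≤ (k:ℝ) ^ r := fun k => Real.rpow_nonneg (Nat.cast_nonneg k) r
  rcases le_or_gt x 1 with hx1 | hx1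
  · -- small x : bound by x^2
    have key : ∀ k ∈ Finset.range (n+1),
        (n.choose k : ℝ) * p ^ k * (1 - p) ^ (n - k) * (if 2 ≤ k then (k : ℝ) ^ r else 0)
          ≤ (2 * x^2) * ((k:ℝ) ^ m * (1/2:ℝ) ^ k) := by
      intro k _
      by_cases h2 : 2 ≤ k
      · rw [if_pos h2]
        have hfk : (0:ℝ) < k.factorial := by exact_mod_cast k.factorial_pos
        have hxk : x ^ k ≤ x ^ 2 := pow_le_pow_of_le_one hx0 hx1 h2
        have hinv : x ^ k / k.factorial ≤ x^2 * (2 * (1/2:ℝ)^k) := by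
          have h2k : (2:ℝ)^k ≤ 2 * k.factorial := aux_two_pow k
          rw [div_le_iff₀ hfk]
          have hh : x^2 * (2 * (1/2:ℝ)^k) * k.factorial = x^2 * (2 * k.factorial) * (1/2:ℝ)^k := by ring
          rw [hh]
          calc x ^ k = x ^ k * ((2:ℝ)^k * (1/2:ℝ)^k) := by
                rw [← mul_pow]; norm_num
            _ = x ^ k * (2:ℝ)^k * (1/2:ℝ)^k := by ring
            _ ≤ x ^ 2 * (2 * k.factorial) * (1/2:ℝ)^k := by
                apply mul_le_mul_of_nonneg_right _ (by positivity)
                exact mul_le_mul hxk h2k (by positivity) (by positivity)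
        calc (n.choose k : ℝ) * p ^ k * (1 - p) ^ (n - k) * (k : ℝ) ^ r
            ≤ (x ^ k / k.factorial) * (k:ℝ) ^ m := by
              exact mul_le_mul (hw_le k) (hkr_le k h2) (hkr_nonneg k) (by positivity)
          _ ≤ (x^2 * (2 * (1/2:ℝ)^k)) * (k:ℝ) ^ m := by
              apply mul_le_mul_of_nonneg_right hinv (by positivity)
          _ = (2 * x^2) * ((k:ℝ) ^ m * (1/2:ℝ) ^ k) := by ring
      · rw [if_neg h2, mul_zero]
        positivity
    calc (∑ k ∈ Finset.range (n + 1),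
            (n.choose k : ℝ) * p ^ k * (1 - p) ^ (n - k) *
              (if 2 ≤ k then (k : ℝ) ^ r else 0))
        ≤ ∑ k ∈ Finset.range (n+1), (2 * x^2) * ((k:ℝ) ^ m * (1/2:ℝ) ^ k) :=
          Finset.sum_le_sum key
      _ = (2 * x^2) * ∑ k ∈ Finset.range (n+1), (k:ℝ) ^ m * (1/2:ℝ) ^ k := by
          rw [Finset.mul_sum]
      _ ≤ (2 * x^2) * B := by
          apply mul_le_mul_of_nonneg_left (hsumB n) (by positivity)
      _ ≤ C * x ^ (2:ℕ) := by
          rw [hCdef]; nlinarith [sq_nonneg x]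
      _ ≤ C * max (x ^ r) (x ^ (2:ℕ)) := by
          apply mul_le_mul_of_nonneg_left (le_max_right _ _) hC0.le
  · -- large x : bound by x^r
    have hxr1 : (1:ℝ) ≤ x ^ r := Real.one_le_rpow hx1.le hr0
    have hsum1 : ∑ k ∈ Finset.range (n+1), (n.choose k : ℝ) * p ^ k * (1 - p) ^ (n - k) = 1 := by
      have h := add_pow p (1-p) n
      rw [show p + (1-p) = 1 by ring, one_pow] at h
      calc ∑ k ∈ Finset.range (n+1), (n.choose k : ℝ) * p ^ k * (1 - p) ^ (n - k)
          = ∑ k ∈ Finset.range (n+1), p ^ k * (1 - p) ^ (n - k) * (n.choose k : ℝ) :=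
            Finset.sum_congr rfl (fun k _ => by ring)
        _ = 1 := h.symm
    have key : ∀ k ∈ Finset.range (n+1),
        (n.choose k : ℝ) * p ^ k * (1 - p) ^ (n - k) * (if 2 ≤ k then (k : ℝ) ^ r else 0)
          ≤ (n.choose k : ℝ) * p ^ k * (1 - p) ^ (n - k) * ((6:ℝ)^r * x^r)
            + (k:ℝ) ^ m * (1/2:ℝ) ^ k := by
      intro k _
      have hxr0 : 0 ≤ x ^ r := Real.rpow_nonneg hx0 r
      by_cases h2 : 2 ≤ k
      · rw [if_pos h2]
        by_cases h6 : (k:ℝ) ≤ 6 * x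
        · have hkr : (k:ℝ) ^ r ≤ (6:ℝ)^r * x^r := by
            rw [← Real.mul_rpow (by norm_num) hx0]
            exact Real.rpow_le_rpow (Nat.cast_nonneg k) h6 hr0
          have : (n.choose k : ℝ) * p ^ k * (1 - p) ^ (n - k) * (k : ℝ) ^ r
              ≤ (n.choose k : ℝ) * p ^ k * (1 - p) ^ (n - k) * ((6:ℝ)^r * x^r) :=
            mul_le_mul_of_nonneg_left hkr (hw_nonneg k)
          have hpos : (0:ℝ) ≤ (k:ℝ) ^ m * (1/2:ℝ) ^ k := by positivity
          linarith
        · push_neg at h6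
          have hfk : (0:ℝ) < k.factorial := by exact_mod_cast k.factorial_pos
          have hkpos : (0:ℝ) < k := by exact_mod_cast (by omega : 0 < k)
          have hkkpos : (0:ℝ) < (k:ℝ)^k := by positivity
          have h1 : x ^ k / k.factorial ≤ (3*x/k)^k := by
            rw [div_pow, div_le_div_iff₀ hfk hkkpos]
            calc x ^ k * (k:ℝ)^k ≤ x ^ k * ((3:ℝ)^k * k.factorial) := by
                  apply mul_le_mul_of_nonneg_left (aux_pow_self_le k) (by positivity)
              _ = (3*x)^k * k.factorial := by rw [mul_pow]; ring
          have h2' : (3*x/k : ℝ)^k ≤ (1/2:ℝ)^k := by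
            apply pow_le_pow_left₀ (by positivity)
            rw [div_le_iff₀ hkpos]
            linarith
          have hchain : (n.choose k : ℝ) * p ^ k * (1 - p) ^ (n - k) * (k : ℝ) ^ r
              ≤ (k:ℝ) ^ m * (1/2:ℝ) ^ k := by
            calc (n.choose k : ℝ) * p ^ k * (1 - p) ^ (n - k) * (k : ℝ) ^ r
                ≤ (x ^ k / k.factorial) * (k:ℝ) ^ m :=
                  mul_le_mul (hw_le k) (hkr_le k h2) (hkr_nonneg k) (by positivity)
              _ ≤ (1/2:ℝ)^k * (k:ℝ) ^ m := by
                  apply mul_le_mul_of_nonneg_right (h1.trans h2') (by positivity)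
              _ = (k:ℝ) ^ m * (1/2:ℝ) ^ k := by ring
          have hpos2 : (0:ℝ) ≤ (n.choose k : ℝ) * p ^ k * (1 - p) ^ (n - k) * ((6:ℝ)^r * x^r) := by
            exact mul_nonneg (hw_nonneg k) (by positivity)
          linarith
      · rw [if_neg h2, mul_zero]
        have hpos2 : (0:ℝ) ≤ (n.choose k : ℝ) * p ^ k * (1 - p) ^ (n - k) * ((6:ℝ)^r * x^r) :=
          mul_nonneg (hw_nonneg k) (by positivity)
        have hpos : (0:ℝ) ≤ (k:ℝ) ^ m * (1/2:ℝ) ^ k := by positivity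
        linarith
    calc (∑ k ∈ Finset.range (n + 1),
            (n.choose k : ℝ) * p ^ k * (1 - p) ^ (n - k) *
              (if 2 ≤ k then (k : ℝ) ^ r else 0))
        ≤ ∑ k ∈ Finset.range (n+1),
            ((n.choose k : ℝ) * p ^ k * (1 - p) ^ (n - k) * ((6:ℝ)^r * x^r)
              + (k:ℝ) ^ m * (1/2:ℝ) ^ k) := Finset.sum_le_sum key
      _ = (∑ k ∈ Finset.range (n+1), (n.choose k : ℝ) * p ^ k * (1 - p) ^ (n - k)) * ((6:ℝ)^r * x^r)
            + ∑ k ∈ Finset.range (n+1), (k:ℝ) ^ m * (1/2:ℝ) ^ k := by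
          rw [Finset.sum_add_distrib, Finset.sum_mul]
      _ ≤ 1 * ((6:ℝ)^r * x^r) + B := by
          rw [hsum1]
          exact add_le_add_right (hsumB n) _
      _ ≤ C * x ^ r := by
          rw [hCdef]
          nlinarith [mul_le_mul_of_nonneg_left hxr1 hB0]
      _ ≤ C * max (x ^ r) (x ^ (2:ℕ)) :=
          mul_le_mul_of_nonneg_left (le_max_left _ _) hC0.le
end

section
/- For each n let N_n be multinomially distributed with parameters (n, p_{n,1},…,p_{n,M_n}) with max_m p_{n,m} → 0 and liminf_n n·min_m p_{n,m} > 0. For numbers α_{n,m}, define s_n² = (2/n²) Σ_m α_{n,m}²/p_{n,m}² + (4/n) Σ_m p_{n,m} (α_{n,m}/p_{n,m} − Σ_m α_{n,m})². Then Σ_m α_{n,m}( N_{n,m}(N_{n,m}−1)/(n(n−1)p_{n,m}²) − 1 ) = O_P( s_n + n^{−1/2} Σ_m |α_{n,m}| ). -/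
open MeasureTheory ProbabilityTheory Filter


set_option linter.unusedSectionVars false
set_option linter.unusedVariables false
set_option maxHeartbeats 1600000

noncomputable def mhK {κ : Type*} [Fintype κ] [DecidableEq κ] (q α' : κ → ℝ) : κ → κ → ℝ :=
  fun i j => (if i = j then α' i / q i ^ 2 else 0) - ∑ m, α' m

noncomputable def mhV1 {κ : Type*} [Fintype κ] (q α' : κ → ℝ) : ℝ :=
  ∑ i, q i * (α' i / q i - ∑ m, α' m) ^ 2

noncomputable def mhV2 {κ : Type*} [Fintype κ] [DecidableEq κ] (q α' : κ → ℝ) : ℝ :=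
  ∑ i, ∑ j, q i * q j * (mhK q α' i j * mhK q α' i j)

noncomputable def mhBound {n : ℕ} (V1 V2 : ℝ) (r r' s s' : Fin n) : ℝ :=
  V2 * ((if s = r then (1:ℝ) else 0) * (if s' = r' then (1:ℝ) else 0) +
        (if s = r' then (1:ℝ) else 0) * (if s' = r then (1:ℝ) else 0)) +
  V1 * ((if s = r then (1:ℝ) else 0) + (if s = r' then (1:ℝ) else 0) +
        (if s' = r then (1:ℝ) else 0) + (if s' = r' then (1:ℝ) else 0))

section Calc

variable {κ : Type*} [Fintype κ] [DecidableEq κ] {q α' : κ → ℝ}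

lemma mhK_symm (i j : κ) : mhK q α' i j = mhK q α' j i := by
  by_cases h : i = j
  · subst h; rfl
  · simp [mhK, h, Ne.symm h]

lemma mh_inner (hq0 : ∀ m, 0 < q m) (hq1 : ∑ m, q m = 1) (i : κ) :
    ∑ j, q j * mhK q α' i j = α' i / q i - ∑ m, α' m := by
  have h0 : q i ≠ 0 := (hq0 i).ne'
  simp only [mhK, mul_sub, Finset.sum_sub_distrib, ← Finset.sum_mul, hq1, one_mul]
  rw [Finset.sum_congr rfl (fun j _ => show q j * (if i = j then α' i / q i ^ 2 else 0)
    = (if i = j then q j * (α' i / q i ^ 2) else 0) by split_ifs <;> simp)]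
  rw [Finset.sum_ite_eq]
  simp only [Finset.mem_univ, if_true]
  have : q i * (α' i / q i ^ 2) = α' i / q i := by field_simp
  rw [this]

lemma mh_V1_nonneg (hq0 : ∀ m, 0 < q m) : 0 ≤ mhV1 q α' :=
  Finset.sum_nonneg fun i _ => mul_nonneg (hq0 i).le (sq_nonneg _)

lemma mh_V2_nonneg (hq0 : ∀ m, 0 < q m) : 0 ≤ mhV2 q α' :=
  Finset.sum_nonneg fun i _ => Finset.sum_nonneg fun j _ =>
    mul_nonneg (mul_nonneg (hq0 i).le (hq0 j).le) (mul_self_nonneg _)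

lemma mh_C0 (hq0 : ∀ m, 0 < q m) (hq1 : ∑ m, q m = 1) :
    ∑ i, ∑ j, q i * q j * mhK q α' i j = 0 := by
  have hfac : ∀ i : κ, ∑ j, q i * q j * mhK q α' i j = q i * ∑ j, q j * mhK q α' i j := by
    intro i; rw [Finset.mul_sum]; exact Finset.sum_congr rfl fun j _ => by ring
  have step : ∀ i : κ, ∑ j, q i * q j * mhK q α' i j = α' i - q i * ∑ m, α' m := by
    intro i
    rw [hfac i, mh_inner hq0 hq1 i]
    have h0 : q i ≠ 0 := (hq0 i).ne'
    field_simp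
  rw [Finset.sum_congr rfl fun i _ => step i, Finset.sum_sub_distrib, ← Finset.sum_mul, hq1]
  ring

lemma mh_C1 (hq0 : ∀ m, 0 < q m) (hq1 : ∑ m, q m = 1) :
    ∑ i, ∑ j, ∑ k, q i * q j * q k * (mhK q α' i j * mhK q α' i k) = mhV1 q α' := by
  refine Finset.sum_congr rfl fun i _ => ?_
  have h1 : ∀ j : κ, ∑ k, q i * q j * q k * (mhK q α' i j * mhK q α' i k)
      = (q i * (q j * mhK q α' i j)) * ∑ k, q k * mhK q α' i k := by
    intro j; rw [Finset.mul_sum]; exact Finset.sum_congr rfl fun k _ => by ring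
  rw [Finset.sum_congr rfl fun j _ => h1 j, ← Finset.sum_mul, ← Finset.mul_sum,
    mh_inner hq0 hq1 i]
  ring

lemma mh_W1 (hq0 : ∀ m, 0 < q m) (hq1 : ∑ m, q m = 1) :
    ∑ i, ∑ j, ∑ k, q i * q j * q k * (mhK q α' j i * mhK q α' j k) = mhV1 q α' := by
  rw [Finset.sum_comm, ← mh_C1 hq0 hq1]
  refine Finset.sum_congr rfl fun j _ => Finset.sum_congr rfl fun i _ =>
    Finset.sum_congr rfl fun k _ => by ring

lemma mh_V2_eq (hq0 : ∀ m, 0 < q m) (hq1 : ∑ m, q m = 1) :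
    mhV2 q α' = (∑ i, α' i ^ 2 / q i ^ 2) - (∑ m, α' m) ^ 2 := by
  unfold mhV2
  have hrow : ∀ i : κ, ∑ j, q i * q j * (mhK q α' i j * mhK q α' i j)
      = q i * (∑ m, α' m) ^ 2 + q i * q i * ((α' i / q i ^ 2 - ∑ m, α' m) ^ 2 - (∑ m, α' m) ^ 2) := by
    intro i
    have hterm : ∀ j : κ, q i * q j * (mhK q α' i j * mhK q α' i j)
        = q i * q j * (∑ m, α' m) ^ 2 +
          (if i = j then q i * q i * ((α' i / q i ^ 2 - ∑ m, α' m) ^ 2 - (∑ m, α' m) ^ 2) else 0) := by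
      intro j
      by_cases h : i = j
      · subst h
        have hK : mhK q α' i i = α' i / q i ^ 2 - ∑ m, α' m := by simp [mhK]
        rw [hK, if_pos rfl]; ring
      · have hK : mhK q α' i j = 0 - ∑ m, α' m := by simp [mhK, h]
        rw [hK, if_neg h]; ring
    rw [Finset.sum_congr rfl fun j _ => hterm j, Finset.sum_add_distrib, Finset.sum_ite_eq]
    simp only [Finset.mem_univ, if_true]
    rw [show ∑ j, q i * q j * (∑ m, α' m) ^ 2 = q i * (∑ j, q j) * (∑ m, α' m) ^ 2 by
      rw [Finset.mul_sum, Finset.sum_mul]]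
    rw [hq1]
    ring
  rw [Finset.sum_congr rfl fun i _ => hrow i, Finset.sum_add_distrib, ← Finset.sum_mul, hq1]
  have step : ∀ i : κ, q i * q i * ((α' i / q i ^ 2 - ∑ m, α' m) ^ 2 - (∑ m, α' m) ^ 2)
      = α' i ^ 2 / q i ^ 2 - 2 * α' i * ∑ m, α' m := by
    intro i
    have h0 : q i ≠ 0 := (hq0 i).ne'
    field_simp
    ring
  rw [Finset.sum_congr rfl fun i _ => step i, Finset.sum_sub_distrib, ← Finset.sum_mul,
    ← Finset.mul_sum]
  ring

lemma mh_C0' (hq0 : ∀ m, 0 < q m) (hq1 : ∑ m, q m = 1) :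
    ∑ i, ∑ j, ∑ k, ∑ l, q i * q j * q k * q l * (mhK q α' i j * mhK q α' k l) = 0 := by
  have step : ∀ i j : κ, ∑ k, ∑ l, q i * q j * q k * q l * (mhK q α' i j * mhK q α' k l)
      = (q i * q j * mhK q α' i j) * ∑ k, ∑ l, q k * q l * mhK q α' k l := by
    intro i j
    rw [Finset.mul_sum]
    refine Finset.sum_congr rfl fun k _ => ?_
    rw [Finset.mul_sum]
    exact Finset.sum_congr rfl fun l _ => by ring
  calc ∑ i, ∑ j, ∑ k, ∑ l, q i * q j * q k * q l * (mhK q α' i j * mhK q α' k l)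
      = ∑ i, ∑ j, (q i * q j * mhK q α' i j) * ∑ k, ∑ l, q k * q l * mhK q α' k l :=
        Finset.sum_congr rfl fun i _ => Finset.sum_congr rfl fun j _ => step i j
    _ = 0 := by
        rw [mh_C0 hq0 hq1]
        simp

lemma ite_nonneg_01 (c : Prop) [Decidable c] : (0:ℝ) ≤ if c then 1 else 0 := by
  split <;> norm_num

lemma mhBound_nonneg {n : ℕ} {V1 V2 : ℝ} (hV1 : 0 ≤ V1) (hV2 : 0 ≤ V2) (r r' s s' : Fin n) :
    0 ≤ mhBound V1 V2 r r' s s' := by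
  unfold mhBound
  have h := ite_nonneg_01
  positivity

lemma mhBound_sum {n : ℕ} (V1 V2 : ℝ) (r r' : Fin n) :
    ∑ x : Fin n × Fin n, mhBound V1 V2 r r' x.1 x.2 = 2 * V2 + 4 * n * V1 := by
  have hone : ∀ b : Fin n, (∑ x : Fin n, (if x = b then (1:ℝ) else 0)) = 1 := by
    intro b; simp
  have hpair : ∀ b c : Fin n, (∑ x : Fin n, ∑ y : Fin n,
      (if x = b then (1:ℝ) else 0) * (if y = c then (1:ℝ) else 0)) = 1 := by
    intro b c
    rw [← Finset.sum_mul_sum, hone b, hone c, one_mul]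
  have hflat : ∀ b : Fin n, (∑ x : Fin n, ∑ _y : Fin n, (if x = b then (1:ℝ) else 0)) = n := by
    intro b
    have hx : ∀ x : Fin n, (∑ _y : Fin n, (if x = b then (1:ℝ) else 0))
        = (n : ℝ) * (if x = b then (1:ℝ) else 0) := by
      intro x; rw [Finset.sum_const, Finset.card_univ, Fintype.card_fin, nsmul_eq_mul]
    rw [Finset.sum_congr rfl fun x _ => hx x, ← Finset.mul_sum, hone b, mul_one]
  rw [Fintype.sum_prod_type]
  simp only [mhBound, Finset.sum_add_distrib, ← Finset.mul_sum, Finset.sum_ite_eq',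
    Finset.mem_univ, if_true, Finset.sum_const, Finset.card_univ, Fintype.card_fin,
    nsmul_eq_mul]
  ring_nf
  rw [hpair r r', hpair r' r, hflat r, hflat r']
  ring

end Calc

section Aux

variable {Ω : Type*} [MeasurableSpace Ω] {P : Measure Ω} [IsProbabilityMeasure P]
variable {κ : Type*} [Fintype κ] [MeasurableSpace κ] [MeasurableSingletonClass κ] [DecidableEq κ]
variable {n : ℕ} {J : Fin n → Ω → κ} {q : κ → ℝ}

lemma aux_key (hIndep : iIndepFun J P)
    (hLaw : ∀ r m, P {ω | J r ω = m} = ENNReal.ofReal (q m))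
    (S : Finset (Fin n)) (v : Fin n → κ) :
    P (⋂ r ∈ S, {ω | J r ω = v r}) = ∏ r ∈ S, ENNReal.ofReal (q (v r)) := by
  have h1 : P (⋂ r ∈ S, {ω | J r ω = v r}) = ∏ r ∈ S, P (J r ⁻¹' {v r}) :=
    hIndep.meas_biInter (fun i _ => ⟨{v i}, measurableSet_singleton _, rfl⟩)
  rw [h1]
  exact Finset.prod_congr rfl fun r _ => hLaw r (v r)

lemma aux_exp {β : Type*} [Fintype β] [MeasurableSpace β] [MeasurableSingletonClass β]
    (G : Ω → β) (hG : Measurable G) (F : β → ℝ) :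
    ∫ ω, F (G ω) ∂P = ∑ b, (P (G ⁻¹' {b})).toReal * F b := by
  have hFm : Measurable F := fun _ _ => (Set.to_countable _).measurableSet
  rw [← integral_map hG.aemeasurable hFm.aestronglyMeasurable]
  have : IsProbabilityMeasure (P.map G) := Measure.isProbabilityMeasure_map hG.aemeasurable
  rw [integral_fintype Integrable.of_finite]
  refine Finset.sum_congr rfl fun b _ => ?_
  rw [measureReal_def, Measure.map_apply hG (measurableSet_singleton b), smul_eq_mul]

lemma aux_int {β : Type*} [Fintype β] [MeasurableSpace β] [MeasurableSingletonClass β]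
    (G : Ω → β) (hG : Measurable G) (F : β → ℝ) :
    Integrable (fun ω => F (G ω)) P := by
  have hFm : Measurable F := fun _ _ => (Set.to_countable _).measurableSet
  refine Integrable.mono' (integrable_const (∑ b, |F b|)) ((hFm.comp hG).aestronglyMeasurable)
    (ae_of_all _ fun ω => ?_)
  rw [Real.norm_eq_abs]
  exact Finset.single_le_sum (f := fun b => |F b|) (fun b _ => abs_nonneg _) (Finset.mem_univ _)

lemma aux_exp2 (hmeas : ∀ r, Measurable (J r)) (hq0 : ∀ m, 0 ≤ q m)
    (hIndep : iIndepFun J P)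
    (hLaw : ∀ r m, P {ω | J r ω = m} = ENNReal.ofReal (q m))
    {a b : Fin n} (hab : a ≠ b) (F : κ → κ → ℝ) :
    ∫ ω, F (J a ω) (J b ω) ∂P = ∑ i, ∑ j, q i * q j * F i j := by
  have hG : Measurable (fun ω => (J a ω, J b ω)) := (hmeas a).prodMk (hmeas b)
  have h1 := aux_exp (P := P) (fun ω => (J a ω, J b ω)) hG (fun x => F x.1 x.2)
  rw [h1, Fintype.sum_prod_type]
  refine Finset.sum_congr rfl fun i _ => Finset.sum_congr rfl fun j _ => ?_
  have hpre : (fun ω => (J a ω, J b ω)) ⁻¹' {(i, j)} =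
      ⋂ r ∈ ({a, b} : Finset (Fin n)), {ω | J r ω = (fun t => if t = a then i else j) r} := by
    ext ω
    simp [Prod.ext_iff, hab.symm, Set.mem_iInter]
  have hkey := aux_key hIndep hLaw ({a, b} : Finset (Fin n)) (fun t => if t = a then i else j)
  rw [hpre, hkey, Finset.prod_insert (by simpa using hab), Finset.prod_singleton]
  simp only [if_pos rfl, if_true, if_neg hab.symm]
  rw [← ENNReal.ofReal_mul (hq0 i), ENNReal.toReal_ofReal (mul_nonneg (hq0 i) (hq0 j))]

lemma aux_exp3 (hmeas : ∀ r, Measurable (J r)) (hq0 : ∀ m, 0 ≤ q m)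
    (hIndep : iIndepFun J P)
    (hLaw : ∀ r m, P {ω | J r ω = m} = ENNReal.ofReal (q m))
    {a b c : Fin n} (hab : a ≠ b) (hac : a ≠ c) (hbc : b ≠ c) (F : κ → κ → κ → ℝ) :
    ∫ ω, F (J a ω) (J b ω) (J c ω) ∂P = ∑ i, ∑ j, ∑ k, q i * q j * q k * F i j k := by
  have hG : Measurable (fun ω => (J a ω, J b ω, J c ω)) :=
    (hmeas a).prodMk ((hmeas b).prodMk (hmeas c))
  have h1 := aux_exp (P := P) (fun ω => (J a ω, J b ω, J c ω)) hG (fun x => F x.1 x.2.1 x.2.2)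
  rw [h1, Fintype.sum_prod_type]
  refine Finset.sum_congr rfl fun i _ => ?_
  rw [Fintype.sum_prod_type]
  refine Finset.sum_congr rfl fun j _ => Finset.sum_congr rfl fun k _ => ?_
  have hpre : (fun ω => (J a ω, J b ω, J c ω)) ⁻¹' {(i, j, k)} =
      ⋂ r ∈ ({a, b, c} : Finset (Fin n)),
        {ω | J r ω = (fun t => if t = a then i else if t = b then j else k) r} := by
    ext ω
    simp [Prod.ext_iff, hab.symm, hac.symm, hbc.symm, Set.mem_iInter]
  have hkey := aux_key hIndep hLaw ({a, b, c} : Finset (Fin n))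
    (fun t => if t = a then i else if t = b then j else k)
  rw [hpre, hkey]
  rw [Finset.prod_insert (by simp [hab, hac]), Finset.prod_insert (by simpa using hbc),
    Finset.prod_singleton]
  simp only [if_pos rfl, if_true, if_neg hab.symm, if_neg hac.symm, if_neg hbc.symm]
  rw [ENNReal.toReal_mul, ENNReal.toReal_mul, ENNReal.toReal_ofReal (hq0 i),
    ENNReal.toReal_ofReal (hq0 j), ENNReal.toReal_ofReal (hq0 k)]
  ring

lemma aux_exp4 (hmeas : ∀ r, Measurable (J r)) (hq0 : ∀ m, 0 ≤ q m)
    (hIndep : iIndepFun J P)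
    (hLaw : ∀ r m, P {ω | J r ω = m} = ENNReal.ofReal (q m))
    {a b c d : Fin n} (hab : a ≠ b) (hac : a ≠ c) (had : a ≠ d) (hbc : b ≠ c) (hbd : b ≠ d)
    (hcd : c ≠ d) (F : κ → κ → κ → κ → ℝ) :
    ∫ ω, F (J a ω) (J b ω) (J c ω) (J d ω) ∂P =
      ∑ i, ∑ j, ∑ k, ∑ l, q i * q j * q k * q l * F i j k l := by
  have hG : Measurable (fun ω => (J a ω, J b ω, J c ω, J d ω)) :=
    (hmeas a).prodMk ((hmeas b).prodMk ((hmeas c).prodMk (hmeas d)))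
  have h1 := aux_exp (P := P) (fun ω => (J a ω, J b ω, J c ω, J d ω)) hG
    (fun x => F x.1 x.2.1 x.2.2.1 x.2.2.2)
  rw [h1, Fintype.sum_prod_type]
  refine Finset.sum_congr rfl fun i _ => ?_
  rw [Fintype.sum_prod_type]
  refine Finset.sum_congr rfl fun j _ => ?_
  rw [Fintype.sum_prod_type]
  refine Finset.sum_congr rfl fun k _ => Finset.sum_congr rfl fun l _ => ?_
  have hpre : (fun ω => (J a ω, J b ω, J c ω, J d ω)) ⁻¹' {(i, j, k, l)} =
      ⋂ r ∈ ({a, b, c, d} : Finset (Fin n)),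
        {ω | J r ω = (fun t => if t = a then i else if t = b then j else if t = c then k else l) r} := by
    ext ω
    simp [Prod.ext_iff, hab.symm, hac.symm, had.symm, hbc.symm, hbd.symm, hcd.symm, Set.mem_iInter]
  have hkey := aux_key hIndep hLaw ({a, b, c, d} : Finset (Fin n))
    (fun t => if t = a then i else if t = b then j else if t = c then k else l)
  rw [hpre, hkey]
  rw [Finset.prod_insert (by simp [hab, hac, had]), Finset.prod_insert (by simp [hbc, hbd]),
    Finset.prod_insert (by simpa using hcd), Finset.prod_singleton]
  simp only [if_pos rfl, if_true, if_neg hab.symm, if_neg hac.symm, if_neg had.symm,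
    if_neg hbc.symm, if_neg hbd.symm, if_neg hcd.symm]
  rw [ENNReal.toReal_mul, ENNReal.toReal_mul, ENNReal.toReal_mul, ENNReal.toReal_ofReal (hq0 i),
    ENNReal.toReal_ofReal (hq0 j), ENNReal.toReal_ofReal (hq0 k), ENNReal.toReal_ofReal (hq0 l)]
  ring

lemma aux_term (hmeas : ∀ r, Measurable (J r)) (hq0 : ∀ m, 0 < q m) (hq1 : ∑ m, q m = 1)
    (hIndep : iIndepFun J P)
    (hLaw : ∀ r m, P {ω | J r ω = m} = ENNReal.ofReal (q m)) (α' : κ → ℝ)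
    {r r' s s' : Fin n} (hrr : r ≠ r') (hss : s ≠ s') :
    ∫ ω, mhK q α' (J r ω) (J r' ω) * mhK q α' (J s ω) (J s' ω) ∂P ≤
      mhBound (mhV1 q α') (mhV2 q α') r r' s s' := by
  have hq0' : ∀ m, 0 ≤ q m := fun m => (hq0 m).le
  have hV1 := mh_V1_nonneg (α' := α') hq0
  have hV2 := mh_V2_nonneg (α' := α') hq0
  by_cases h1 : s = r
  · by_cases h2 : s' = r'
    · -- identical pairs
      rw [h1, h2, aux_exp2 hmeas hq0' hIndep hLaw hrr
        (fun i j => mhK q α' i j * mhK q α' i j)]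
      have : (∑ i, ∑ j, q i * q j * (mhK q α' i j * mhK q α' i j)) = mhV2 q α' := rfl
      rw [this]
      simp only [mhBound, h1, h2, if_pos rfl, if_true, if_neg hrr, if_neg hrr.symm]
      nlinarith [hV1, hV2]
    · -- s = r, s' ∉ {r, r'}
      have hs'r : s' ≠ r := fun h => hss (h1.trans h.symm)
      rw [h1, aux_exp3 hmeas hq0' hIndep hLaw hrr (Ne.symm hs'r) (fun h => h2 h.symm)
        (fun i j k => mhK q α' i j * mhK q α' i k), mh_C1 hq0 hq1]
      simp only [mhBound, if_pos rfl, if_true, if_neg hrr, if_neg hs'r, if_neg h2]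
      nlinarith [hV1, hV2]
  · by_cases h3 : s = r'
    · by_cases h4 : s' = r
      · -- swapped pair
        rw [h3, h4, aux_exp2 hmeas hq0' hIndep hLaw hrr
          (fun i j => mhK q α' i j * mhK q α' j i)]
        have : (∑ i, ∑ j, q i * q j * (mhK q α' i j * mhK q α' j i)) = mhV2 q α' := by
          refine Finset.sum_congr rfl fun i _ => Finset.sum_congr rfl fun j _ => ?_
          rw [mhK_symm j i]
        rw [this]
        simp only [mhBound, if_pos rfl, if_true, if_neg hrr, if_neg hrr.symm, if_neg h1,
          if_neg (show ¬ s = r from h1)]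
        nlinarith [hV1, hV2]
      · -- s = r', s' ∉ {r, r'}
        have hs'r' : s' ≠ r' := fun h => hss (h3.trans h.symm)
        rw [h3, aux_exp3 hmeas hq0' hIndep hLaw hrr (Ne.symm h4) (Ne.symm hs'r')
          (fun i j k => mhK q α' i j * mhK q α' j k)]
        have : (∑ i, ∑ j, ∑ k, q i * q j * q k * (mhK q α' i j * mhK q α' j k)) = mhV1 q α' := by
          rw [← mh_W1 hq0 hq1]
          refine Finset.sum_congr rfl fun i _ => Finset.sum_congr rfl fun j _ =>
            Finset.sum_congr rfl fun k _ => ?_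
          rw [mhK_symm i j]
        rw [this]
        simp only [mhBound, if_pos rfl, if_true, if_neg hrr.symm, if_neg h4, if_neg hs'r']
        nlinarith [hV1, hV2]
    · by_cases h5 : s' = r
      · -- s ∉ {r, r'}, s' = r
        rw [h5, aux_exp3 hmeas hq0' hIndep hLaw hrr (Ne.symm h1) (Ne.symm h3)
          (fun i j k => mhK q α' i j * mhK q α' k i)]
        have : (∑ i, ∑ j, ∑ k, q i * q j * q k * (mhK q α' i j * mhK q α' k i)) = mhV1 q α' := by
          rw [← mh_C1 hq0 hq1]
          refine Finset.sum_congr rfl fun i _ => Finset.sum_congr rfl fun j _ =>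
            Finset.sum_congr rfl fun k _ => ?_
          rw [mhK_symm k i]
        rw [this]
        simp only [mhBound, if_pos rfl, if_true, if_neg h1, if_neg h3, if_neg hrr]
        nlinarith [hV1, hV2]
      · by_cases h6 : s' = r'
        · -- s ∉ {r, r'}, s' = r'
          rw [h6, aux_exp3 hmeas hq0' hIndep hLaw hrr (Ne.symm h1) (Ne.symm h3)
            (fun i j k => mhK q α' i j * mhK q α' k j)]
          have : (∑ i, ∑ j, ∑ k, q i * q j * q k * (mhK q α' i j * mhK q α' k j)) = mhV1 q α' := by
            rw [← mh_W1 hq0 hq1]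
            refine Finset.sum_congr rfl fun i _ => Finset.sum_congr rfl fun j _ =>
              Finset.sum_congr rfl fun k _ => ?_
            rw [mhK_symm i j, mhK_symm k j]
          rw [this]
          simp only [mhBound, if_pos rfl, if_true, if_neg h1, if_neg h3, if_neg hrr.symm]
          nlinarith [hV1, hV2]
        · -- all distinct
          rw [aux_exp4 hmeas hq0' hIndep hLaw hrr (Ne.symm h1) (Ne.symm h5) (Ne.symm h3)
            (Ne.symm h6) hss (fun i j k l => mhK q α' i j * mhK q α' k l), mh_C0' hq0 hq1]
          simp only [mhBound, if_neg h1, if_neg h3, if_neg h5, if_neg h6]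
          nlinarith [hV1, hV2]

lemma aux_moment (hmeas : ∀ r, Measurable (J r)) (hq0 : ∀ m, 0 < q m) (hq1 : ∑ m, q m = 1)
    (hIndep : iIndepFun J P)
    (hLaw : ∀ r m, P {ω | J r ω = m} = ENNReal.ofReal (q m)) (α' : κ → ℝ) :
    ∫ ω, (∑ x ∈ (Finset.univ.offDiag : Finset (Fin n × Fin n)),
        mhK q α' (J x.1 ω) (J x.2 ω)) ^ 2 ∂P ≤
      ((n : ℝ) * n - n) * (2 * mhV2 q α' + 4 * n * mhV1 q α') := by
  have hq0' : ∀ m, 0 ≤ q m := fun m => (hq0 m).le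
  have hV1 := mh_V1_nonneg (α' := α') hq0
  have hV2 := mh_V2_nonneg (α' := α') hq0
  set D : Finset (Fin n × Fin n) := Finset.univ.offDiag with hD
  have hint : ∀ x y : Fin n × Fin n, Integrable
      (fun ω => mhK q α' (J x.1 ω) (J x.2 ω) * mhK q α' (J y.1 ω) (J y.2 ω)) P := by
    intro x y
    exact aux_int (fun ω => ((J x.1 ω, J x.2 ω), (J y.1 ω, J y.2 ω)))
      (((hmeas x.1).prodMk (hmeas x.2)).prodMk ((hmeas y.1).prodMk (hmeas y.2)))
      (fun z => mhK q α' z.1.1 z.1.2 * mhK q α' z.2.1 z.2.2)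
  have hexpand : ∀ ω : Ω, (∑ x ∈ D, mhK q α' (J x.1 ω) (J x.2 ω)) ^ 2
      = ∑ x ∈ D, ∑ y ∈ D, mhK q α' (J x.1 ω) (J x.2 ω) * mhK q α' (J y.1 ω) (J y.2 ω) := by
    intro ω
    rw [sq, Finset.sum_mul_sum]
  rw [integral_congr_ae (ae_of_all _ hexpand)]
  rw [integral_finset_sum _ (fun x _ => integrable_finset_sum _ (fun y _ => hint x y))]
  have hstep : ∀ x ∈ D, (∫ ω, ∑ y ∈ D,
      mhK q α' (J x.1 ω) (J x.2 ω) * mhK q α' (J y.1 ω) (J y.2 ω) ∂P)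
      ≤ 2 * mhV2 q α' + 4 * n * mhV1 q α' := by
    intro x hx
    rw [integral_finset_sum _ (fun y _ => hint x y)]
    have hxne : x.1 ≠ x.2 := (Finset.mem_offDiag.mp hx).2.2
    have hb1 : ∀ y ∈ D, (∫ ω, mhK q α' (J x.1 ω) (J x.2 ω) * mhK q α' (J y.1 ω) (J y.2 ω) ∂P)
        ≤ mhBound (mhV1 q α') (mhV2 q α') x.1 x.2 y.1 y.2 := by
      intro y hy
      exact aux_term hmeas hq0 hq1 hIndep hLaw α' hxne (Finset.mem_offDiag.mp hy).2.2
    calc (∑ y ∈ D, ∫ ω, mhK q α' (J x.1 ω) (J x.2 ω) * mhK q α' (J y.1 ω) (J y.2 ω) ∂P)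
        ≤ ∑ y ∈ D, mhBound (mhV1 q α') (mhV2 q α') x.1 x.2 y.1 y.2 :=
          Finset.sum_le_sum hb1
      _ ≤ ∑ y : Fin n × Fin n, mhBound (mhV1 q α') (mhV2 q α') x.1 x.2 y.1 y.2 :=
          Finset.sum_le_sum_of_subset_of_nonneg (Finset.subset_univ _)
            (fun y _ _ => mhBound_nonneg hV1 hV2 _ _ _ _)
      _ = 2 * mhV2 q α' + 4 * n * mhV1 q α' := mhBound_sum _ _ _ _
  calc (∑ x ∈ D, ∫ ω, ∑ y ∈ D,
      mhK q α' (J x.1 ω) (J x.2 ω) * mhK q α' (J y.1 ω) (J y.2 ω) ∂P)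
      ≤ ∑ _x ∈ D, (2 * mhV2 q α' + 4 * n * mhV1 q α') := Finset.sum_le_sum hstep
    _ = ((n : ℝ) * n - n) * (2 * mhV2 q α' + 4 * n * mhV1 q α') := by
        rw [Finset.sum_const, nsmul_eq_mul, hD, Finset.offDiag_card, Finset.card_univ,
          Fintype.card_fin]
        congr 1
        have hle : n ≤ n * n := by nlinarith [Nat.zero_le n]
        push_cast [Nat.cast_sub hle]
        ring
    _ = _ := rfl

lemma aux_sq_int (hmeas : ∀ r, Measurable (J r)) (α' : κ → ℝ) :
    Integrable (fun ω => (∑ x ∈ (Finset.univ.offDiag : Finset (Fin n × Fin n)),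
      mhK q α' (J x.1 ω) (J x.2 ω)) ^ 2) P := by
  have hint : ∀ x y : Fin n × Fin n, Integrable
      (fun ω => mhK q α' (J x.1 ω) (J x.2 ω) * mhK q α' (J y.1 ω) (J y.2 ω)) P := by
    intro x y
    exact aux_int (fun ω => ((J x.1 ω, J x.2 ω), (J y.1 ω, J y.2 ω)))
      (((hmeas x.1).prodMk (hmeas x.2)).prodMk ((hmeas y.1).prodMk (hmeas y.2)))
      (fun z => mhK q α' z.1.1 z.1.2 * mhK q α' z.2.1 z.2.2)
  have hexpand : (fun ω : Ω => (∑ x ∈ (Finset.univ.offDiag : Finset (Fin n × Fin n)),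
        mhK q α' (J x.1 ω) (J x.2 ω)) ^ 2)
      = fun ω => ∑ x ∈ (Finset.univ.offDiag : Finset (Fin n × Fin n)),
          ∑ y ∈ (Finset.univ.offDiag : Finset (Fin n × Fin n)),
            mhK q α' (J x.1 ω) (J x.2 ω) * mhK q α' (J y.1 ω) (J y.2 ω) := by
    funext ω; rw [sq, Finset.sum_mul_sum]
  rw [hexpand]
  exact integrable_finset_sum _ fun x _ => integrable_finset_sum _ fun y _ => hint x y

end Aux


/-- for multinomial `N_n` with `max_m p_{n,m} → 0` and
`liminf n·min_m p_{n,m} > 0`, the quadratic form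
`Σ_m α_{n,m}(N_{n,m}(N_{n,m}−1)/(n(n−1)p_{n,m}²) − 1)` is `O_P(s_n + n^{−1/2} Σ_m |α_{n,m}|)`,
where `s_n² = (2/n²) Σ_m α_{n,m}²/p_{n,m}² + (4/n) Σ_m p_{n,m}(α_{n,m}/p_{n,m} − Σ_m α_{n,m})²`. -/
theorem multinomial_quadratic_rate
    {Ω : Type*} [MeasurableSpace Ω] (P : Measure Ω) [IsProbabilityMeasure P]
    (M : ℕ → ℕ) (p : (n : ℕ) → Fin (M n) → ℝ) (α : (n : ℕ) → Fin (M n) → ℝ)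
    (I : (n : ℕ) → Fin n → Ω → Fin (M n))
    (hmeas : ∀ n r, Measurable (I n r))
    (hIndep : ∀ n, iIndepFun (I n) P)
    (hLaw : ∀ n r m, P {ω | I n r ω = m} = ENNReal.ofReal (p n m))
    (hp : ∀ n m, 0 < p n m) (hpsum : ∀ n, ∑ m, p n m = 1)
    (hpmax : ∀ ε > 0, ∀ᶠ n : ℕ in atTop, ∀ m, p n m < ε)
    (hliminf : ∃ c > 0, ∀ᶠ n : ℕ in atTop, ∀ m, c ≤ (n : ℝ) * p n m)
    (N : (n : ℕ) → Fin (M n) → Ω → ℕ)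
    (hN : ∀ n m ω, N n m ω = (Finset.univ.filter fun r : Fin n => I n r ω = m).card)
    (s : ℕ → ℝ)
    (hs : ∀ n, s n = Real.sqrt (
      (2 / (n : ℝ) ^ 2) * ∑ m, (α n m) ^ 2 / (p n m) ^ 2 +
      (4 / (n : ℝ)) * ∑ m, p n m * (α n m / p n m - ∑ m', α n m') ^ 2)) :
    ∀ ε > 0, ∃ B > 0, ∀ᶠ n : ℕ in atTop,
      P {ω | B * (s n + ((∑ m, |α n m|) / Real.sqrt n)) < |∑ m, α n m *
          ((N n m ω : ℝ) * ((N n m ω : ℝ) - 1) /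
            ((n : ℝ) * ((n : ℝ) - 1) * (p n m) ^ 2) - 1)|}
        ≤ ENNReal.ofReal ε := by
  intro ε hε
  have hBpos : (0:ℝ) < Real.sqrt (2/ε) := Real.sqrt_pos.mpr (by positivity)
  refine ⟨Real.sqrt (2/ε), hBpos, ?_⟩
  set B : ℝ := Real.sqrt (2/ε) with hBdef
  have hB2 : B ^ 2 = 2/ε := Real.sq_sqrt (by positivity)
  filter_upwards [eventually_ge_atTop 2] with n hn2
  have hx2 : (2:ℝ) ≤ (n:ℝ) := by exact_mod_cast hn2
  have hx0 : (0:ℝ) < (n:ℝ) := by linarith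
  have hnn : (0:ℝ) < (n:ℝ) * ((n:ℝ) - 1) := by nlinarith
  -- abbreviations
  set q : Fin (M n) → ℝ := p n with hqdef
  set α' : Fin (M n) → ℝ := α n with hα'def
  set J : Fin n → Ω → Fin (M n) := I n with hJdef
  set D : Finset (Fin n × Fin n) := Finset.univ.offDiag with hDdef
  set c : ℝ := ((n:ℝ) * ((n:ℝ) - 1))⁻¹ with hcdef
  set a : ℝ := (∑ m, |α n m|) / Real.sqrt n with hadef
  have ha : 0 ≤ a := div_nonneg (Finset.sum_nonneg fun m _ => abs_nonneg _) (Real.sqrt_nonneg _)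
  have hs0 : 0 ≤ s n := by rw [hs n]; exact Real.sqrt_nonneg _
  by_cases hzero : s n + a ≤ 0
  · -- degenerate case: all α n m = 0
    have ha0 : a = 0 := le_antisymm (by linarith) ha
    have hsumabs : (∑ m, |α n m|) = 0 := by
      have hsq : (0:ℝ) < Real.sqrt n := Real.sqrt_pos.mpr hx0
      have := ha0
      rw [hadef, div_eq_zero_iff] at this
      rcases this with h | h
      · exact h
      · exact absurd h hsq.ne'
    have hα : ∀ m, α n m = 0 := by
      intro m
      have := (Finset.sum_eq_zero_iff_of_nonneg (fun m _ => abs_nonneg (α n m))).mp hsumabs m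
        (Finset.mem_univ m)
      exact abs_eq_zero.mp this
    have hempty : {ω | B * (s n + ((∑ m, |α n m|) / Real.sqrt n)) < |∑ m, α n m *
          ((N n m ω : ℝ) * ((N n m ω : ℝ) - 1) /
            ((n : ℝ) * ((n : ℝ) - 1) * (p n m) ^ 2) - 1)|} = ∅ := by
      ext ω
      have hsum0 : (∑ m, α n m * ((N n m ω : ℝ) * ((N n m ω : ℝ) - 1) /
          ((n : ℝ) * ((n : ℝ) - 1) * (p n m) ^ 2) - 1)) = 0 :=
        Finset.sum_eq_zero fun m _ => by rw [hα m]; ring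
      have hsn : s n = 0 := le_antisymm (by linarith) hs0
      simp only [Set.mem_setOf_eq, hsum0, abs_zero, Set.mem_empty_iff_false, iff_false, not_lt]
      rw [hsn, hsumabs]
      simp
    rw [hempty]
    simp
  · push_neg at hzero
    -- step A: pointwise representation
    have hcard : ∀ (ω : Ω) (m : Fin (M n)), (N n m ω : ℝ) * ((N n m ω : ℝ) - 1)
        = ((D.filter (fun x => J x.1 ω = m ∧ J x.2 ω = m)).card : ℝ) := by
      intro ω m
      set S : Finset (Fin n) := Finset.univ.filter (fun r => J r ω = m) with hSdef
      have hSD : D.filter (fun x => J x.1 ω = m ∧ J x.2 ω = m) = S.offDiag := by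
        ext x
        simp only [hDdef, Finset.mem_filter, Finset.mem_offDiag, Finset.mem_univ, true_and,
          hSdef]
        tauto
      have hNS : N n m ω = S.card := hN n m ω
      rw [hSD, Finset.offDiag_card, ← hNS]
      have hle : N n m ω ≤ N n m ω * N n m ω := by nlinarith [Nat.zero_le (N n m ω)]
      push_cast [Nat.cast_sub hle]
      ring
    have hsplit : ∀ ω : Ω, (∑ x ∈ D, mhK q α' (J x.1 ω) (J x.2 ω))
        = (∑ m, (α' m / q m ^ 2) *
            ((D.filter (fun x => J x.1 ω = m ∧ J x.2 ω = m)).card : ℝ))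
          - ((n:ℝ) * (n:ℝ) - n) * (∑ m, α' m) := by
      intro ω
      have hpt : ∀ i j : Fin (M n), (if i = j then α' i / q i ^ 2 else 0)
          = ∑ m, (if i = m ∧ j = m then α' m / q m ^ 2 else 0) := by
        intro i j
        by_cases h : i = j
        · subst h
          rw [if_pos rfl]
          simp only [and_self]
          rw [Finset.sum_ite_eq]
          simp
        · rw [if_neg h]
          symm
          exact Finset.sum_eq_zero fun m _ => by
            rw [if_neg]; rintro ⟨rfl, rfl⟩; exact h rfl
      have h1 : (∑ x ∈ D, mhK q α' (J x.1 ω) (J x.2 ω))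
          = (∑ x ∈ D, ∑ m, (if J x.1 ω = m ∧ J x.2 ω = m then α' m / q m ^ 2 else 0))
            - (D.card : ℝ) * (∑ m, α' m) := by
        rw [Finset.sum_congr rfl (fun x _ => show mhK q α' (J x.1 ω) (J x.2 ω)
          = (∑ m, (if J x.1 ω = m ∧ J x.2 ω = m then α' m / q m ^ 2 else 0)) - (∑ m, α' m) by
            rw [← hpt]; rfl)]
        rw [Finset.sum_sub_distrib, Finset.sum_const, nsmul_eq_mul]
      rw [h1, Finset.sum_comm]
      have hDcard : (D.card : ℝ) = (n:ℝ) * (n:ℝ) - n := by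
        rw [hDdef, Finset.offDiag_card, Finset.card_univ, Fintype.card_fin]
        have hle : n ≤ n * n := by nlinarith [Nat.zero_le n]
        push_cast [Nat.cast_sub hle]
        ring
      rw [hDcard]
      congr 1
      refine Finset.sum_congr rfl fun m _ => ?_
      rw [← Finset.sum_filter, Finset.sum_const, nsmul_eq_mul]
      ring
    have hrep : ∀ ω : Ω, (∑ m, α' m * ((N n m ω : ℝ) * ((N n m ω : ℝ) - 1) /
          ((n : ℝ) * ((n : ℝ) - 1) * (q m) ^ 2) - 1))
        = c * ∑ x ∈ D, mhK q α' (J x.1 ω) (J x.2 ω) := by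
      intro ω
      rw [hsplit ω]
      have hc1 : c * ((n:ℝ) * (n:ℝ) - n) = 1 := by
        rw [hcdef, show (n:ℝ) * (n:ℝ) - n = (n:ℝ) * ((n:ℝ) - 1) by ring,
          inv_mul_cancel₀ hnn.ne']
      have hterm : ∀ m, α' m * ((N n m ω : ℝ) * ((N n m ω : ℝ) - 1) /
            ((n : ℝ) * ((n : ℝ) - 1) * (q m) ^ 2) - 1)
          = c * ((α' m / q m ^ 2) *
              ((D.filter (fun x => J x.1 ω = m ∧ J x.2 ω = m)).card : ℝ)) - α' m := by
        intro m
        rw [hcard ω m, hcdef]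
        have hpm : q m ≠ 0 := (hp n m).ne'
        field_simp
      rw [Finset.sum_congr rfl fun m _ => hterm m, Finset.sum_sub_distrib, ← Finset.mul_sum]
      linear_combination (∑ m, α' m) * hc1
    -- Chebyshev
    set t : ℝ := B * (s n + a) with htdef
    have ht : 0 < t := mul_pos hBpos hzero
    have hTm : Measurable (fun ω => c * ∑ x ∈ D, mhK q α' (J x.1 ω) (J x.2 ω)) := by
      apply Measurable.const_mul
      apply Finset.measurable_sum
      intro x _
      have hFm : Measurable (fun z : Fin (M n) × Fin (M n) => mhK q α' z.1 z.2) :=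
        fun _ _ => (Set.to_countable _).measurableSet
      exact hFm.comp ((hmeas n x.1).prodMk (hmeas n x.2))
    have hint2 : Integrable (fun ω => (c * ∑ x ∈ D, mhK q α' (J x.1 ω) (J x.2 ω)) ^ 2) P := by
      have hfun : (fun ω => (c * ∑ x ∈ D, mhK q α' (J x.1 ω) (J x.2 ω)) ^ 2)
          = fun ω => c ^ 2 * (∑ x ∈ D, mhK q α' (J x.1 ω) (J x.2 ω)) ^ 2 := by
        funext ω; ring
      rw [hfun]
      exact (aux_sq_int (fun r => hmeas n r) α').const_mul _
    have hV1 := mh_V1_nonneg (q := q) (α' := α') (fun m => hp n m)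
    have hsn2 : s n ^ 2 = (2 / (n:ℝ) ^ 2) * (∑ m, α' m ^ 2 / q m ^ 2)
        + (4 / (n:ℝ)) * mhV1 q α' := by
      rw [hs n, Real.sq_sqrt]
      · rfl
      · refine add_nonneg (mul_nonneg (by positivity)
          (Finset.sum_nonneg fun m _ => div_nonneg (sq_nonneg _) (sq_nonneg _)))
          (mul_nonneg (by positivity)
          (Finset.sum_nonneg fun m _ => mul_nonneg (hp n m).le (sq_nonneg _)))
    have hmoment : ∫ ω, (c * ∑ x ∈ D, mhK q α' (J x.1 ω) (J x.2 ω)) ^ 2 ∂P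
        ≤ 2 * (s n + a) ^ 2 := by
      have hfun : (fun ω => (c * ∑ x ∈ D, mhK q α' (J x.1 ω) (J x.2 ω)) ^ 2)
          = fun ω => c ^ 2 * (∑ x ∈ D, mhK q α' (J x.1 ω) (J x.2 ω)) ^ 2 := by
        funext ω; ring
      rw [hfun, integral_const_mul]
      have h2 := aux_moment (fun r => hmeas n r) (fun m => hp n m) (hpsum n) (hIndep n)
        (fun r m => hLaw n r m) α'
      have h3 : c ^ 2 * ∫ ω, (∑ x ∈ D, mhK q α' (J x.1 ω) (J x.2 ω)) ^ 2 ∂P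
          ≤ c ^ 2 * (((n:ℝ) * n - n) * (2 * mhV2 q α' + 4 * n * mhV1 q α')) :=
        mul_le_mul_of_nonneg_left h2 (sq_nonneg c)
      refine h3.trans ?_
      set Sap : ℝ := ∑ m, α' m ^ 2 / q m ^ 2 with hSapdef
      have hSapnn : 0 ≤ Sap :=
        Finset.sum_nonneg fun m _ => div_nonneg (sq_nonneg _) (sq_nonneg _)
      have hV2le : mhV2 q α' ≤ Sap := by
        rw [mh_V2_eq (fun m => hp n m) (hpsum n)]
        nlinarith [sq_nonneg (∑ m, α' m)]
      have hcsq : c ^ 2 * ((n:ℝ) * n - n) = c := by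
        rw [hcdef, show (n:ℝ) * n - n = (n:ℝ) * ((n:ℝ) - 1) by ring]
        field_simp
      have hmid : c * (2 * mhV2 q α' + 4 * n * mhV1 q α') ≤ 2 * s n ^ 2 := by
        rw [hsn2, hcdef, inv_mul_eq_div, div_le_iff₀ hnn]
        have hexp : 2 * (2 / (n:ℝ) ^ 2 * Sap + 4 / (n:ℝ) * mhV1 q α') * ((n:ℝ) * ((n:ℝ) - 1))
            = 4 * Sap * ((n:ℝ) - 1) / (n:ℝ) + 8 * mhV1 q α' * ((n:ℝ) - 1) := by
          field_simp
          ring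
        rw [hexp]
        have h4 : 2 * mhV2 q α' ≤ 4 * Sap * ((n:ℝ) - 1) / (n:ℝ) := by
          rw [le_div_iff₀ hx0]
          nlinarith [hSapnn, hx2, hV2le]
        have h5 : 4 * (n:ℝ) * mhV1 q α' ≤ 8 * mhV1 q α' * ((n:ℝ) - 1) := by
          nlinarith [hV1, hx2]
        linarith
      calc c ^ 2 * (((n:ℝ) * n - n) * (2 * mhV2 q α' + 4 * n * mhV1 q α'))
          = c * (2 * mhV2 q α' + 4 * n * mhV1 q α') := by rw [← mul_assoc, hcsq]
        _ ≤ 2 * s n ^ 2 := hmid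
        _ ≤ 2 * (s n + a) ^ 2 := by nlinarith [hs0, ha]
    have hsub : {ω | t < |∑ m, α' m * ((N n m ω : ℝ) * ((N n m ω : ℝ) - 1) /
          ((n : ℝ) * ((n : ℝ) - 1) * (q m) ^ 2) - 1)|}
        ⊆ {ω | ENNReal.ofReal (t ^ 2)
            ≤ ENNReal.ofReal ((c * ∑ x ∈ D, mhK q α' (J x.1 ω) (J x.2 ω)) ^ 2)} := by
      intro ω hω
      simp only [Set.mem_setOf_eq] at hω ⊢
      rw [hrep ω] at hω
      apply ENNReal.ofReal_le_ofReal
      have h6 : t ^ 2 ≤ |c * ∑ x ∈ D, mhK q α' (J x.1 ω) (J x.2 ω)| ^ 2 :=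
        pow_le_pow_left₀ ht.le hω.le 2
      rwa [sq_abs] at h6
    refine le_trans (measure_mono hsub) ?_
    have hmarkov := meas_ge_le_lintegral_div
      (μ := P) (f := fun ω => ENNReal.ofReal ((c * ∑ x ∈ D, mhK q α' (J x.1 ω) (J x.2 ω)) ^ 2))
      ((ENNReal.measurable_ofReal.comp (hTm.pow_const 2)).aemeasurable)
      (ε := ENNReal.ofReal (t ^ 2))
      (ENNReal.ofReal_pos.mpr (by positivity)).ne' ENNReal.ofReal_ne_top
    refine le_trans hmarkov ?_
    rw [← ofReal_integral_eq_lintegral_ofReal hint2 (ae_of_all _ fun ω => sq_nonneg _)]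
    have hdiv : ENNReal.ofReal (∫ ω, (c * ∑ x ∈ D, mhK q α' (J x.1 ω) (J x.2 ω)) ^ 2 ∂P)
          / ENNReal.ofReal (t ^ 2)
        ≤ ENNReal.ofReal (2 * (s n + a) ^ 2) / ENNReal.ofReal (t ^ 2) :=
      ENNReal.div_le_div_right (ENNReal.ofReal_le_ofReal hmoment) _
    refine le_trans hdiv ?_
    rw [← ENNReal.ofReal_div_of_pos (by positivity)]
    apply ENNReal.ofReal_le_ofReal
    have ht2 : t ^ 2 = B ^ 2 * (s n + a) ^ 2 := by rw [htdef]; ring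
    rw [ht2, hB2, div_le_iff₀ (by positivity)]
    have hfin : ε * (2 / ε * (s n + a) ^ 2) = 2 * (s n + a) ^ 2 := by
      field_simp
    rw [hfin]
end

section
/- Let D_k be the Dirichlet kernel on [−π,π]. For every ε ∈ (0, π] there exists a constant C (independent of k and ε) such that (2k+1)⁻¹ ∫_{−π}^{π} ∫_{−π}^{π} 1_{|x₁−x₂|>ε} D_k(x₁−x₂)² dx₁ dx₂ ≤ C ( ε + 1/(ε² k) ). In particular, if ε_k → 0 with ε_k √k → ∞, this quantity tends to 0 as k → ∞. -/
open Real MeasureTheory Filter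

/-- The Dirichlet kernel. -/
noncomputable def dirichletKernel (k : ℕ) (u : ℝ) : ℝ :=
  Real.sin (((k : ℝ) + 1 / 2) * u) / (2 * π * Real.sin (u / 2))

/-- The normalized off-diagonal mass of the Fourier projection kernel:
`(2k+1)⁻¹ ∫∫_{[−π,π]²} 1_{|x₁−x₂|>ε} D_k(x₁−x₂)² dx₁ dx₂`. -/
noncomputable def dirichletOffDiag (k : ℕ) (ε : ℝ) : ℝ :=
  (2 * (k : ℝ) + 1)⁻¹ * ∫ x₁ in Set.Icc (-π) π, ∫ x₂ in Set.Icc (-π) π,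
    (if ε < |x₁ - x₂| then dirichletKernel k (x₁ - x₂) ^ 2 else 0)

/-! ### Auxiliary lemmas -/

lemma abs_sin_nat_mul_le (n : ℕ) (θ : ℝ) : |Real.sin (n * θ)| ≤ n * |Real.sin θ| := by
  induction n with
  | zero => simp
  | succ n ih =>
    have h : ((n + 1 : ℕ) : ℝ) * θ = n * θ + θ := by push_cast; ring
    rw [h, Real.sin_add]
    calc |Real.sin (n * θ) * Real.cos θ + Real.cos (n * θ) * Real.sin θ|
        ≤ |Real.sin (n * θ) * Real.cos θ| + |Real.cos (n * θ) * Real.sin θ| := abs_add_le _ _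
      _ ≤ |Real.sin (n * θ)| * 1 + 1 * |Real.sin θ| := by
          rw [abs_mul, abs_mul]
          gcongr
          · exact Real.abs_cos_le_one θ
          · exact Real.abs_cos_le_one _
      _ ≤ (n : ℝ) * |Real.sin θ| + 1 * |Real.sin θ| := by
          have := abs_nonneg (Real.sin θ)
          nlinarith [ih]
      _ = ((n + 1 : ℕ) : ℝ) * |Real.sin θ| := by push_cast; ring

/-- Global bound `|D_k(u)| ≤ (2k+1)/(2π)`. -/
lemma dirichletKernel_abs_le (k : ℕ) (u : ℝ) :
    |dirichletKernel k u| ≤ (2 * (k : ℝ) + 1) / (2 * π) := by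
  by_cases hs : Real.sin (u / 2) = 0
  · simp [dirichletKernel, hs]
    positivity
  · have hnum : |Real.sin (((k : ℝ) + 1 / 2) * u)| ≤ (2 * (k : ℝ) + 1) * |Real.sin (u / 2)| := by
      have h : ((k : ℝ) + 1 / 2) * u = ((2 * k + 1 : ℕ) : ℝ) * (u / 2) := by push_cast; ring
      rw [h]
      have := abs_sin_nat_mul_le (2 * k + 1) (u / 2)
      push_cast at this ⊢
      linarith
    have habs : (0 : ℝ) < |Real.sin (u / 2)| := abs_pos.2 hs
    rw [dirichletKernel, abs_div, abs_mul, abs_of_pos (by positivity : (0:ℝ) < 2 * π)]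
    calc |Real.sin (((k : ℝ) + 1 / 2) * u)| / (2 * π * |Real.sin (u / 2)|)
        ≤ ((2 * (k : ℝ) + 1) * |Real.sin (u / 2)|) / (2 * π * |Real.sin (u / 2)|) := by
          gcongr
      _ = (2 * (k : ℝ) + 1) / (2 * π) := by
          rw [mul_comm (2 * π) |Real.sin (u / 2)|, mul_comm (2 * (k:ℝ) + 1) |Real.sin (u / 2)|,
            mul_div_mul_left _ _ habs.ne']

/-- Bound `|D_k(u)| ≤ 1/(2πc)` whenever `c ≤ |sin(u/2)|`, `c > 0`. -/
lemma dirichletKernel_abs_le' (k : ℕ) (u : ℝ) {c : ℝ} (hc : 0 < c)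
    (h : c ≤ |Real.sin (u / 2)|) :
    |dirichletKernel k u| ≤ 1 / (2 * π * c) := by
  rw [dirichletKernel, abs_div, abs_mul, abs_of_pos (by positivity : (0:ℝ) < 2 * π)]
  apply div_le_div₀ (by norm_num) (Real.abs_sin_le_one _) (by positivity)
  have : (0:ℝ) < 2 * π := by positivity
  nlinarith

lemma abs_sin_half (u : ℝ) (h : |u| ≤ 2 * π) : |Real.sin (u / 2)| = Real.sin (|u| / 2) := by
  rcases le_or_gt 0 u with hu | hu
  · rw [abs_of_nonneg hu]
    exact abs_of_nonneg (Real.sin_nonneg_of_nonneg_of_le_pi (by positivity)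
      (by rw [abs_of_nonneg hu] at h; linarith))
  · rw [abs_of_neg hu]
    rw [abs_of_neg hu] at h
    have h1 : Real.sin (u / 2) ≤ 0 :=
      Real.sin_nonpos_of_nonpos_of_neg_pi_le (by linarith) (by linarith)
    rw [abs_of_nonpos h1, neg_div, Real.sin_neg]

/-- the singular weight used to dominate the corner contribution -/
noncomputable def offPhi (ε x : ℝ) : ℝ :=
  if π - ε < |x| then (π - |x|) ^ (-(1/2) : ℝ) else 0

lemma offPhi_nonneg {ε x : ℝ} (hx : |x| ≤ π) : 0 ≤ offPhi ε x := by
  unfold offPhi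
  split_ifs
  · exact Real.rpow_nonneg (by linarith) _
  · exact le_refl 0

/-! ### The pointwise bound -/

lemma pointwise_bound (k : ℕ) {ε x₁ x₂ : ℝ} (hε : 0 < ε) (hεπ : ε ≤ π)
    (h1 : |x₁| < π) (h2 : |x₂| < π) :
    (if ε < |x₁ - x₂| then dirichletKernel k (x₁ - x₂) ^ 2 else 0) ≤
      (4 * ε ^ 2)⁻¹ + (2 * (k : ℝ) + 1) / (8 * π) * offPhi ε x₁ * offPhi ε x₂ := by
  have hπ : (0:ℝ) < π := Real.pi_pos
  have hφ1 : 0 ≤ offPhi ε x₁ := offPhi_nonneg h1.le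
  have hφ2 : 0 ≤ offPhi ε x₂ := offPhi_nonneg h2.le
  have hprod : 0 ≤ (2 * (k : ℝ) + 1) / (8 * π) * offPhi ε x₁ * offPhi ε x₂ := by positivity
  split_ifs with hcond
  swap
  · positivity
  set u := x₁ - x₂ with hu
  have hu2π : |u| < 2 * π := by
    calc |u| ≤ |x₁| + |x₂| := abs_sub _ _
      _ < 2 * π := by linarith
  have hsabs : |Real.sin (u / 2)| = Real.sin (|u| / 2) := abs_sin_half u hu2π.le
  -- a generic step: if ε/π ≤ |sin(u/2)| then D² ≤ (4ε²)⁻¹ and we are done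
  have generic : ε / π ≤ |Real.sin (u / 2)| →
      dirichletKernel k u ^ 2 ≤ (4 * ε ^ 2)⁻¹ +
        (2 * (k : ℝ) + 1) / (8 * π) * offPhi ε x₁ * offPhi ε x₂ := by
    intro hsin
    have hK := dirichletKernel_abs_le' k u (by positivity) hsin
    have hKK : dirichletKernel k u ^ 2 ≤ (1 / (2 * π * (ε / π))) ^ 2 := by
      rw [← sq_abs]
      exact pow_le_pow_left₀ (abs_nonneg _) hK 2
    have hden : 2 * π * (ε / π) = 2 * ε := by
      field_simp
    have heq : (1 / (2 * π * (ε / π))) ^ 2 = (4 * ε ^ 2)⁻¹ := by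
      rw [hden]
      rw [div_pow, one_pow, mul_pow, one_div]
      norm_num
    rw [heq] at hKK
    linarith
  rcases le_or_gt |u| π with hP | hP
  · -- moderate distance: ε < |u| ≤ π
    apply generic
    rw [hsabs]
    have hj : 2 / π * (|u| / 2) ≤ Real.sin (|u| / 2) :=
      Real.mul_le_sin (by positivity) (by linarith)
    have : 2 / π * (|u| / 2) = |u| / π := by ring
    rw [this] at hj
    have : ε / π ≤ |u| / π := (div_le_div_iff_of_pos_right hπ).mpr hcond.le
    linarith
  · -- corner: π < |u|
    -- opposite signs: |u| = |x₁| + |x₂|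
    have hx1 := abs_lt.1 h1
    have hx2 := abs_lt.1 h2
    have habs : |u| = |x₁| + |x₂| := by
      rcases abs_cases u with ⟨he, hge⟩ | ⟨he, hlt⟩
      · -- u ≥ 0 so u > π, x₁ > 0, x₂ < 0
        rw [he] at hP
        have hx1pos : 0 < x₁ := by simp only [hu] at hP ⊢; linarith
        have hx2neg : x₂ < 0 := by simp only [hu] at hP ⊢; linarith
        rw [he, abs_of_pos hx1pos, abs_of_neg hx2neg, hu]; try ring
      · rw [he] at hP
        have hx1neg : x₁ < 0 := by simp only [hu] at hP ⊢; linarith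
        have hx2pos : 0 < x₂ := by simp only [hu] at hP ⊢; linarith
        rw [he, abs_of_neg hx1neg, abs_of_pos hx2pos, hu]; try ring
    set a := π - |x₁| with ha
    set b := π - |x₂| with hb
    have hapos : 0 < a := by simp [ha]; linarith [h1]
    have hbpos : 0 < b := by simp [hb]; linarith [h2]
    have habsum : |u| = 2 * π - (a + b) := by rw [habs, ha, hb]; ring
    have htπ : a + b < π := by rw [habsum] at hP; linarith
    have hsint : |Real.sin (u / 2)| = Real.sin ((a + b) / 2) := by
      rw [hsabs, habsum]
      rw [show (2 * π - (a + b)) / 2 = π - (a + b) / 2 by ring, Real.sin_pi_sub]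
    have hjord : (a + b) / π ≤ |Real.sin (u / 2)| := by
      rw [hsint]
      have hj : 2 / π * ((a + b) / 2) ≤ Real.sin ((a + b) / 2) :=
        Real.mul_le_sin (by positivity) (by linarith)
      calc (a + b) / π = 2 / π * ((a + b) / 2) := by ring
        _ ≤ _ := hj
    rcases le_or_gt ε (a + b) with hta | htb
    · apply generic
      calc ε / π ≤ (a + b) / π := by gcongr
        _ ≤ _ := hjord
    · -- a + b < ε : use the singular bound
      have hM := dirichletKernel_abs_le k u
      have hK := dirichletKernel_abs_le' k u (show (0:ℝ) < (a + b)/π by positivity) hjord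
      have hsq : dirichletKernel k u ^ 2 ≤
          (2 * (k:ℝ) + 1) / (2 * π) * (1 / (2 * π * ((a + b) / π))) := by
        rw [← sq_abs, sq]
        exact mul_le_mul hM hK (abs_nonneg _) (by positivity)
      have heq2 : (2 * (k:ℝ) + 1) / (2 * π) * (1 / (2 * π * ((a + b) / π)))
          = (2 * (k:ℝ) + 1) / (4 * π * (a + b)) := by
        have hden2 : 2 * π * ((a + b) / π) = 2 * (a + b) := by field_simp
        rw [hden2, div_mul_div_comm, mul_one]
        congr 1
        ring
      rw [heq2] at hsq
      -- φ values
      have hφ1v : offPhi ε x₁ = (Real.sqrt a)⁻¹ := by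
        rw [offPhi, if_pos (by simp [ha] at hapos ⊢; linarith), ← ha,
          Real.rpow_neg hapos.le, Real.sqrt_eq_rpow, one_div]
      have hφ2v : offPhi ε x₂ = (Real.sqrt b)⁻¹ := by
        rw [offPhi, if_pos (by simp [hb] at hbpos ⊢; linarith), ← hb,
          Real.rpow_neg hbpos.le, Real.sqrt_eq_rpow, one_div]
      have hsa : 0 < Real.sqrt a := Real.sqrt_pos.2 hapos
      have hsb : 0 < Real.sqrt b := Real.sqrt_pos.2 hbpos
      have hamgm : 2 * (Real.sqrt a * Real.sqrt b) ≤ a + b := by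
        nlinarith [sq_nonneg (Real.sqrt a - Real.sqrt b), Real.sq_sqrt hapos.le,
          Real.sq_sqrt hbpos.le]
      have hfinal : (2 * (k:ℝ) + 1) / (4 * π * (a + b)) ≤
          (2 * (k:ℝ) + 1) / (8 * π) * offPhi ε x₁ * offPhi ε x₂ := by
        rw [hφ1v, hφ2v]
        have h8 : (2 * (k:ℝ) + 1) / (8 * π) * (Real.sqrt a)⁻¹ * (Real.sqrt b)⁻¹
            = (2 * (k:ℝ) + 1) / (8 * π * (Real.sqrt a * Real.sqrt b)) := by
          field_simp
        rw [h8]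
        have hle : 8 * π * (Real.sqrt a * Real.sqrt b) ≤ 4 * π * (a + b) := by
          calc 8 * π * (Real.sqrt a * Real.sqrt b) = 4 * π * (2 * (Real.sqrt a * Real.sqrt b)) := by
                ring
            _ ≤ 4 * π * (a + b) := mul_le_mul_of_nonneg_left hamgm (by positivity)
        have hpos : 0 < 8 * π * (Real.sqrt a * Real.sqrt b) := by
          have := Real.pi_pos; positivity
        exact div_le_div_of_nonneg_left (by positivity) hpos hle
      have h0 : (0:ℝ) < (4 * ε ^ 2)⁻¹ := by positivity
      linarith

/-! ### Integrability and integral of `offPhi` -/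

lemma intervalIntegrable_half : ∀ {a b : ℝ},
    IntervalIntegrable (fun x : ℝ => x ^ (-(1/2) : ℝ)) volume a b :=
  fun {a b} => intervalIntegral.intervalIntegrable_rpow' (by norm_num)

lemma integral_rpow_half {ε : ℝ} (hε : 0 ≤ ε) :
    ∫ x in (0:ℝ)..ε, x ^ (-(1/2) : ℝ) = 2 * Real.sqrt ε := by
  rw [integral_rpow (Or.inl (by norm_num))]
  have h0 : (0:ℝ) ^ ((-(1/2):ℝ) + 1) = 0 := by
    rw [Real.zero_rpow (by norm_num)]
  rw [h0]
  rw [show (-(1/2):ℝ) + 1 = 1/2 by norm_num, ← Real.sqrt_eq_rpow]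
  ring

lemma gL_intervalIntegrable {ε : ℝ} :
    IntervalIntegrable (fun x : ℝ => (x + π) ^ (-(1/2) : ℝ)) volume (-π) (ε - π) := by
  have h := (intervalIntegrable_half (a := 0) (b := ε)).comp_sub_right (-π)
  simpa [sub_neg_eq_add, sub_eq_add_neg] using h

lemma gR_intervalIntegrable {ε : ℝ} :
    IntervalIntegrable (fun x : ℝ => (π - x) ^ (-(1/2) : ℝ)) volume (π - ε) π := by
  have h := (intervalIntegrable_half (a := 0) (b := ε)).comp_sub_left π
  simpa using h.symm

lemma offPhi_eq_gL_ae {ε : ℝ} (hε : 0 < ε) (hεπ : ε ≤ π) :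
    (fun x : ℝ => (x + π) ^ (-(1/2) : ℝ)) =ᵐ[volume.restrict (Set.Icc (-π) (ε - π))]
      offPhi ε := by
  have hne : ∀ᵐ x ∂(volume.restrict (Set.Icc (-π) (ε - π))), x ≠ ε - π := by
    apply ae_restrict_of_ae
    have hset : {x : ℝ | ¬ x ≠ ε - π} = {ε - π} := by ext x; simp
    rw [ae_iff, hset]
    exact measure_singleton _
  filter_upwards [ae_restrict_mem measurableSet_Icc, hne] with x hx hxne
  have hπ : (0:ℝ) < π := Real.pi_pos
  have hx1 : -π ≤ x := hx.1
  have hx2 : x < ε - π := lt_of_le_of_ne hx.2 hxne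
  have hxneg : x ≤ 0 := by linarith
  rw [offPhi, if_pos (by rw [abs_of_nonpos hxneg]; linarith), abs_of_nonpos hxneg]
  ring_nf

lemma offPhi_eq_gR_ae {ε : ℝ} (hε : 0 < ε) (hεπ : ε ≤ π) :
    (fun x : ℝ => (π - x) ^ (-(1/2) : ℝ)) =ᵐ[volume.restrict (Set.Icc (π - ε) π)]
      offPhi ε := by
  have hne : ∀ᵐ x ∂(volume.restrict (Set.Icc (π - ε) π)), x ≠ π - ε := by
    apply ae_restrict_of_ae
    have hset : {x : ℝ | ¬ x ≠ π - ε} = {π - ε} := by ext x; simp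
    rw [ae_iff, hset]
    exact measure_singleton _
  filter_upwards [ae_restrict_mem measurableSet_Icc, hne] with x hx hxne
  have hπ : (0:ℝ) < π := Real.pi_pos
  have hx1 : π - ε < x := lt_of_le_of_ne hx.1 (Ne.symm hxne)
  have hxpos : 0 ≤ x := by linarith
  rw [offPhi, if_pos (by rw [abs_of_nonneg hxpos]; exact hx1), abs_of_nonneg hxpos]

lemma offPhi_zero_mid {ε x : ℝ} (hx : x ∈ Set.Icc (ε - π) (π - ε)) : offPhi ε x = 0 := by
  rw [offPhi, if_neg]
  push_neg
  rw [abs_le]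
  exact ⟨by linarith [hx.1], hx.2⟩

lemma offPhi_integrableOn_L {ε : ℝ} (hε : 0 < ε) (hεπ : ε ≤ π) :
    IntegrableOn (offPhi ε) (Set.Icc (-π) (ε - π)) volume := by
  have h := (intervalIntegrable_iff_integrableOn_Icc_of_le
    (by linarith [Real.pi_pos] : -π ≤ ε - π)).1 gL_intervalIntegrable
  exact h.congr (offPhi_eq_gL_ae hε hεπ)

lemma offPhi_integrableOn_R {ε : ℝ} (hε : 0 < ε) (hεπ : ε ≤ π) :
    IntegrableOn (offPhi ε) (Set.Icc (π - ε) π) volume := by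
  have h := (intervalIntegrable_iff_integrableOn_Icc_of_le
    (by linarith [Real.pi_pos] : π - ε ≤ π)).1 gR_intervalIntegrable
  exact h.congr (offPhi_eq_gR_ae hε hεπ)

lemma offPhi_integrableOn_M {ε : ℝ} :
    IntegrableOn (offPhi ε) (Set.Icc (ε - π) (π - ε)) volume := by
  have hz : IntegrableOn (fun _ : ℝ => (0:ℝ)) (Set.Icc (ε - π) (π - ε)) volume :=
    integrableOn_zero
  apply hz.congr
  filter_upwards [ae_restrict_mem measurableSet_Icc] with x hx
  exact (offPhi_zero_mid hx).symm

lemma offPhi_integrableOn {ε : ℝ} (hε : 0 < ε) (hεπ : ε ≤ π) :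
    IntegrableOn (offPhi ε) (Set.Icc (-π) π) volume := by
  have hsub : Set.Icc (-π) π ⊆
      Set.Icc (-π) (ε - π) ∪ (Set.Icc (ε - π) (π - ε) ∪ Set.Icc (π - ε) π) := by
    intro x hx
    rcases le_or_gt x (ε - π) with h | h
    · exact Or.inl ⟨hx.1, h⟩
    rcases le_or_gt x (π - ε) with h' | h'
    · exact Or.inr (Or.inl ⟨h.le, h'⟩)
    · exact Or.inr (Or.inr ⟨h'.le, hx.2⟩)
  exact IntegrableOn.mono_set
    ((offPhi_integrableOn_L hε hεπ).union
      (offPhi_integrableOn_M.union (offPhi_integrableOn_R hε hεπ))) hsub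

lemma offPhi_integral {ε : ℝ} (hε : 0 < ε) (hεπ : ε ≤ π) :
    ∫ x in Set.Icc (-π) π, offPhi ε x = 4 * Real.sqrt ε := by
  have hπ : (0:ℝ) < π := Real.pi_pos
  have h1 : -π ≤ ε - π := by linarith
  have h2 : ε - π ≤ π - ε := by linarith
  have h3 : π - ε ≤ π := by linarith
  have iL : IntervalIntegrable (offPhi ε) volume (-π) (ε - π) :=
    (intervalIntegrable_iff_integrableOn_Icc_of_le h1).2 (offPhi_integrableOn_L hε hεπ)
  have iM : IntervalIntegrable (offPhi ε) volume (ε - π) (π - ε) :=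
    (intervalIntegrable_iff_integrableOn_Icc_of_le h2).2 offPhi_integrableOn_M
  have iR : IntervalIntegrable (offPhi ε) volume (π - ε) π :=
    (intervalIntegrable_iff_integrableOn_Icc_of_le h3).2 (offPhi_integrableOn_R hε hεπ)
  rw [MeasureTheory.integral_Icc_eq_integral_Ioc,
    ← intervalIntegral.integral_of_le (by linarith : -π ≤ π)]
  rw [← intervalIntegral.integral_add_adjacent_intervals (iL.trans iM) iR,
    ← intervalIntegral.integral_add_adjacent_intervals iL iM]
  have hL : ∫ x in (-π)..(ε - π), offPhi ε x = 2 * Real.sqrt ε := by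
    rw [intervalIntegral.integral_congr_ae ?_ ]
    · show (∫ x in (-π)..(ε - π), (x + π) ^ (-(1/2) : ℝ)) = _
      have := intervalIntegral.integral_comp_sub_right
        (a := -π) (b := ε - π) (fun x : ℝ => x ^ (-(1/2) : ℝ)) (-π)
      simp only [sub_neg_eq_add] at this
      rw [this]
      simpa using integral_rpow_half hε.le
    · have h := offPhi_eq_gL_ae hε hεπ
      rw [Filter.EventuallyEq, MeasureTheory.ae_restrict_iff' measurableSet_Icc] at h
      have hmono : ∀ᵐ x ∂(volume : Measure ℝ),
          x ∈ Set.Icc (-π) (ε - π) → (x + π) ^ (-(1/2) : ℝ) = offPhi ε x := h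
      filter_upwards [hmono] with x hx hx'
      exact (hx (Set.mem_Icc.2 ⟨(Set.mem_Ioc.1 (by rwa [Set.uIoc_of_le h1] at hx')).1.le,
        (Set.mem_Ioc.1 (by rwa [Set.uIoc_of_le h1] at hx')).2⟩)).symm
  have hM : ∫ x in (ε - π)..(π - ε), offPhi ε x = 0 := by
    rw [intervalIntegral.integral_congr (g := fun _ => (0:ℝ)) ?_, intervalIntegral.integral_zero]
    intro x hx
    rw [Set.uIcc_of_le h2] at hx
    exact offPhi_zero_mid hx
  have hR : ∫ x in (π - ε)..π, offPhi ε x = 2 * Real.sqrt ε := by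
    rw [intervalIntegral.integral_congr_ae ?_ ]
    · show (∫ x in (π - ε)..π, (π - x) ^ (-(1/2) : ℝ)) = _
      rw [intervalIntegral.integral_comp_sub_left (fun x : ℝ => x ^ (-(1/2) : ℝ)) π]
      simpa using integral_rpow_half hε.le
    · have h := offPhi_eq_gR_ae hε hεπ
      rw [Filter.EventuallyEq, MeasureTheory.ae_restrict_iff' measurableSet_Icc] at h
      have hmono : ∀ᵐ x ∂(volume : Measure ℝ),
          x ∈ Set.Icc (π - ε) π → (π - x) ^ (-(1/2) : ℝ) = offPhi ε x := h
      filter_upwards [hmono] with x hx hx'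
      exact (hx (Set.mem_Icc.2 ⟨(Set.mem_Ioc.1 (by rwa [Set.uIoc_of_le h3] at hx')).1.le,
        (Set.mem_Ioc.1 (by rwa [Set.uIoc_of_le h3] at hx')).2⟩)).symm
  rw [hL, hM, hR]
  ring

/-! ### Main estimate -/

lemma ae_abs_lt_pi : ∀ᵐ x ∂(volume.restrict (Set.Icc (-π) π)), |x| < π := by
  have h1 : ∀ᵐ x ∂(volume.restrict (Set.Icc (-π) π)), x ≠ -π := by
    apply ae_restrict_of_ae
    have hset : {x : ℝ | ¬ x ≠ -π} = {-π} := by ext x; simp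
    rw [ae_iff, hset]; exact measure_singleton _
  have h2 : ∀ᵐ x ∂(volume.restrict (Set.Icc (-π) π)), x ≠ π := by
    apply ae_restrict_of_ae
    have hset : {x : ℝ | ¬ x ≠ π} = {π} := by ext x; simp
    rw [ae_iff, hset]; exact measure_singleton _
  filter_upwards [ae_restrict_mem measurableSet_Icc, h1, h2] with x hx hx1 hx2
  rw [abs_lt]
  exact ⟨lt_of_le_of_ne hx.1 (Ne.symm hx1), lt_of_le_of_ne hx.2 hx2⟩

lemma dirichletOffDiag_nonneg (k : ℕ) (ε : ℝ) : 0 ≤ dirichletOffDiag k ε := by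
  unfold dirichletOffDiag
  apply mul_nonneg (by positivity)
  apply integral_nonneg
  intro x₁
  apply integral_nonneg
  intro x₂
  dsimp only
  split_ifs
  · positivity
  · exact le_refl 0

lemma dirichletOffDiag_le (k : ℕ) (hk : 1 ≤ k) {ε : ℝ} (hε : 0 < ε) (hεπ : ε ≤ π) :
    dirichletOffDiag k ε ≤ 16 * (ε + 1 / (ε ^ 2 * (k : ℝ))) := by
  have hπ : (0:ℝ) < π := Real.pi_pos
  have hvol : (volume (Set.Icc (-π) π)).toReal = 2 * π := by
    rw [Real.volume_Icc, ENNReal.toReal_ofReal (by linarith)]; ring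
  have hφint := offPhi_integrableOn hε hεπ
  have hφval := offPhi_integral hε hεπ
  have hconst : ∀ C : ℝ, IntegrableOn (fun _ : ℝ => C) (Set.Icc (-π) π) volume :=
    fun C => integrableOn_const measure_Icc_lt_top.ne
  -- inner bound
  have inner : ∀ x₁ : ℝ, |x₁| < π →
      (∫ x₂ in Set.Icc (-π) π,
        (if ε < |x₁ - x₂| then dirichletKernel k (x₁ - x₂) ^ 2 else 0)) ≤
      (4 * ε ^ 2)⁻¹ * (2 * π) +
        ((2 * (k:ℝ) + 1) / (8 * π) * (4 * Real.sqrt ε)) * offPhi ε x₁ := by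
    intro x₁ hx₁
    have hφx₁ : 0 ≤ offPhi ε x₁ := offPhi_nonneg hx₁.le
    have hint : Integrable (fun x₂ => (4 * ε ^ 2)⁻¹ +
        ((2 * (k:ℝ) + 1) / (8 * π) * offPhi ε x₁) * offPhi ε x₂)
        (volume.restrict (Set.Icc (-π) π)) :=
      (hconst _).add (hφint.const_mul _)
    have hle : (∫ x₂ in Set.Icc (-π) π,
        (if ε < |x₁ - x₂| then dirichletKernel k (x₁ - x₂) ^ 2 else 0)) ≤
        ∫ x₂ in Set.Icc (-π) π, ((4 * ε ^ 2)⁻¹ +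
          ((2 * (k:ℝ) + 1) / (8 * π) * offPhi ε x₁) * offPhi ε x₂) := by
      apply integral_mono_of_nonneg
      · apply Filter.Eventually.of_forall
        intro x₂
        dsimp only
        split_ifs
        · positivity
        · exact le_refl 0
      · exact hint
      · filter_upwards [ae_abs_lt_pi] with x₂ hx₂
        have := pointwise_bound k hε hεπ hx₁ hx₂
        exact this
    refine hle.trans ?_
    rw [integral_add (hconst _) (hφint.const_mul _), setIntegral_const,
      integral_const_mul, measureReal_def, hvol, hφval, smul_eq_mul]
    ring_nf
    exact le_refl _
  -- outer bound
  have houter : (∫ x₁ in Set.Icc (-π) π, ∫ x₂ in Set.Icc (-π) π,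
      (if ε < |x₁ - x₂| then dirichletKernel k (x₁ - x₂) ^ 2 else 0)) ≤
      (4 * ε ^ 2)⁻¹ * (2 * π) * (2 * π) +
        ((2 * (k:ℝ) + 1) / (8 * π) * (4 * Real.sqrt ε)) * (4 * Real.sqrt ε) := by
    have hint2 : Integrable (fun x₁ => (4 * ε ^ 2)⁻¹ * (2 * π) +
        ((2 * (k:ℝ) + 1) / (8 * π) * (4 * Real.sqrt ε)) * offPhi ε x₁)
        (volume.restrict (Set.Icc (-π) π)) :=
      (hconst _).add (hφint.const_mul _)
    have hle2 : (∫ x₁ in Set.Icc (-π) π, ∫ x₂ in Set.Icc (-π) π,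
        (if ε < |x₁ - x₂| then dirichletKernel k (x₁ - x₂) ^ 2 else 0)) ≤
        ∫ x₁ in Set.Icc (-π) π, ((4 * ε ^ 2)⁻¹ * (2 * π) +
          ((2 * (k:ℝ) + 1) / (8 * π) * (4 * Real.sqrt ε)) * offPhi ε x₁) := by
      apply integral_mono_of_nonneg
      · apply Filter.Eventually.of_forall
        intro x₁
        apply integral_nonneg
        intro x₂
        dsimp only
        split_ifs
        · positivity
        · exact le_refl 0
      · exact hint2
      · filter_upwards [ae_abs_lt_pi] with x₁ hx₁
        exact inner x₁ hx₁
    refine hle2.trans ?_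
    rw [integral_add (hconst _) (hφint.const_mul _), setIntegral_const,
      integral_const_mul, measureReal_def, hvol, hφval, smul_eq_mul]
    ring_nf
    exact le_refl _
  -- conclusion
  have h2k1 : (0:ℝ) < 2 * (k:ℝ) + 1 := by positivity
  have hkpos : (0:ℝ) < (k:ℝ) := by exact_mod_cast hk
  unfold dirichletOffDiag
  have hb := mul_le_mul_of_nonneg_left houter (inv_nonneg.2 h2k1.le)
  refine hb.trans ?_
  have hsε : Real.sqrt ε * Real.sqrt ε = ε := Real.mul_self_sqrt hε.le
  have e1 : ((2 * (k:ℝ) + 1) / (8 * π) * (4 * Real.sqrt ε)) * (4 * Real.sqrt ε)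
      = 2 * (2 * (k:ℝ) + 1) * ε / π := by
    calc ((2 * (k:ℝ) + 1) / (8 * π) * (4 * Real.sqrt ε)) * (4 * Real.sqrt ε)
        = (2 * (k:ℝ) + 1) / (8 * π) * (16 * (Real.sqrt ε * Real.sqrt ε)) := by ring
      _ = (2 * (k:ℝ) + 1) / (8 * π) * (16 * ε) := by rw [hsε]
      _ = 2 * (2 * (k:ℝ) + 1) * ε / π := by field_simp; ring
  have e2 : (4 * ε ^ 2)⁻¹ * (2 * π) * (2 * π) = π ^ 2 / ε ^ 2 := by
    field_simp; ring
  rw [e1, e2, mul_add]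
  have e3 : (2 * (k:ℝ) + 1)⁻¹ * (2 * (2 * (k:ℝ) + 1) * ε / π) = 2 * ε / π := by
    field_simp
  rw [e3]
  have hB1 : (2 * (k:ℝ) + 1)⁻¹ * (π ^ 2 / ε ^ 2) ≤ 16 * (1 / (ε ^ 2 * (k:ℝ))) := by
    rw [inv_mul_eq_div, div_div, mul_one_div]
    apply div_le_div₀ (by norm_num) ?_ (by positivity) ?_
    · nlinarith [Real.pi_le_four, Real.pi_pos]
    · nlinarith [sq_nonneg ε, hε]
  have hB2 : 2 * ε / π ≤ 16 * ε := by
    rw [div_le_iff₀ hπ]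
    nlinarith [Real.pi_gt_three]
  calc (2 * (k:ℝ) + 1)⁻¹ * (π ^ 2 / ε ^ 2) + 2 * ε / π
      ≤ 16 * (1 / (ε ^ 2 * (k:ℝ))) + 16 * ε := by linarith
    _ = 16 * (ε + 1 / (ε ^ 2 * (k:ℝ))) := by ring

/-- there is a constant `C` (independent of `k` and `ε`) with
`(2k+1)⁻¹ ∫∫ 1_{|x₁−x₂|>ε} D_k(x₁−x₂)² ≤ C (ε + 1/(ε²k))` for all `k ≥ 1` and
`ε ∈ (0, π]`; in particular, if `ε_k → 0` with `ε_k √k → ∞`, this quantity tends to `0`. -/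
theorem dirichlet_off_diagonal :
    (∃ C > 0, ∀ k : ℕ, 1 ≤ k → ∀ ε : ℝ, 0 < ε → ε ≤ π →
      dirichletOffDiag k ε ≤ C * (ε + 1 / (ε ^ 2 * (k : ℝ))))
    ∧ (∀ ε : ℕ → ℝ, (∀ k, 0 < ε k) → (∀ k, ε k ≤ π) →
        Tendsto ε atTop (nhds 0) →
        Tendsto (fun k => ε k * Real.sqrt k) atTop atTop →
        Tendsto (fun k => dirichletOffDiag k (ε k)) atTop (nhds 0)) := by
  constructor
  · exact ⟨16, by norm_num, fun k hk ε hε hεπ => dirichletOffDiag_le k hk hε hεπ⟩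
  · intro ε hεpos hεπ hε0 hεs
    have h2 : Tendsto (fun k : ℕ => 1 / ((ε k) ^ 2 * (k:ℝ))) atTop (nhds 0) := by
      have heq : (fun k : ℕ => 1 / ((ε k) ^ 2 * (k:ℝ)))
          = fun k : ℕ => ((ε k * Real.sqrt k) ^ 2)⁻¹ := by
        funext k
        rw [one_div, mul_pow, Real.sq_sqrt (Nat.cast_nonneg k)]
      rw [heq]
      have hsq : Tendsto (fun k : ℕ => (ε k * Real.sqrt k) ^ 2) atTop atTop := by
        have h := hεs.atTop_mul_atTop₀ hεs
        have : (fun k : ℕ => (ε k * Real.sqrt k) ^ 2)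
            = fun k : ℕ => (ε k * Real.sqrt k) * (ε k * Real.sqrt k) := by
          funext k; ring
        rw [this]
        exact h
      exact tendsto_inv_atTop_zero.comp hsq
    have hub : Tendsto (fun k : ℕ => 16 * (ε k + 1 / ((ε k) ^ 2 * (k:ℝ)))) atTop (nhds 0) := by
      have := (hε0.add h2).const_mul (16:ℝ)
      simpa using this
    apply squeeze_zero' (Eventually.of_forall fun k => dirichletOffDiag_nonneg _ _) ?_ hub
    filter_upwards [eventually_ge_atTop 1] with k hk
    exact dirichletOffDiag_le k hk (hεpos k) (hεπ k)
end

section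
/- Let φ: ℝ → ℝ be bounded with ∫|φ| dλ = 1 and ∫φ² dλ < ∞, and let G be a probability measure on ℝ with bounded Lebesgue density g. Define K_σ(x₁,x₂) = σ⁻¹ φ((x₁−x₂)/σ). Then σ ∫∫ K_σ² d(G×G) → (∫ g² dλ)(∫ φ² dλ) as σ ↓ 0. -/
open MeasureTheory Filter

/-- for bounded `φ` with `∫|φ| = 1`, `∫φ² < ∞` and a probability measure
`G` with bounded Lebesgue density `g`, the convolution kernel
`K_σ(x₁,x₂) = σ⁻¹ φ((x₁−x₂)/σ)` satisfies
`σ ∫∫ K_σ² d(G×G) → (∫ g² dλ)(∫ φ² dλ)` as `σ ↓ 0`. -/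
theorem convolution_kernel_l2_limit
    (φ : ℝ → ℝ) (hφmeas : Measurable φ) (hφbdd : ∃ Cφ, ∀ x, |φ x| ≤ Cφ)
    (hφ1 : ∫ x, |φ x| = 1) (hφ2 : Integrable fun x => φ x ^ 2)
    (g : ℝ → ℝ) (hgmeas : Measurable g) (hg0 : ∀ x, 0 ≤ g x)
    (hgbdd : ∃ Cg, ∀ x, g x ≤ Cg)
    (G : Measure ℝ) (hG : G = volume.withDensity fun x => ENNReal.ofReal (g x))
    (hGprob : IsProbabilityMeasure G) :
    Tendsto (fun σ : ℝ =>
        σ * ∫ x₁, ∫ x₂, (σ⁻¹ * φ ((x₁ - x₂) / σ)) ^ 2 ∂G ∂G)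
      (nhdsWithin 0 (Set.Ioi 0))
      (nhds ((∫ x, g x ^ 2) * ∫ v, φ v ^ 2)) := by
  obtain ⟨Cg, hCg⟩ := hgbdd
  have hCg0 : 0 ≤ Cg := le_trans (hg0 0) (hCg 0)
  -- the total mass of the density is 1
  have hlint : ∫⁻ x, ENNReal.ofReal (g x) = 1 := by
    have h1 : G Set.univ = 1 := hGprob.measure_univ
    rw [hG] at h1
    simpa [withDensity_apply _ MeasurableSet.univ] using h1
  have hgint : Integrable g := by
    refine ⟨hgmeas.aestronglyMeasurable, ?_⟩
    simp only [HasFiniteIntegral]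
    calc ∫⁻ x, (‖g x‖₊ : ENNReal) = ∫⁻ x, ENNReal.ofReal (g x) := by
          refine lintegral_congr fun x => ?_
          exact Real.enorm_eq_ofReal (hg0 x)
      _ = 1 := hlint
      _ < ⊤ := ENNReal.one_lt_top
  have hgone : ∫ x, g x = 1 := by
    rw [integral_eq_lintegral_of_nonneg_ae (Filter.Eventually.of_forall hg0)
      hgmeas.aestronglyMeasurable, hlint, ENNReal.toReal_one]
  -- translated products are integrable
  have hprod : ∀ t : ℝ, Integrable (fun x => g x * g (x - t)) := by
    intro t
    refine Integrable.mono' ((hgint.comp_sub_right t).const_mul Cg)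
      ((hgmeas.mul (hgmeas.comp (measurable_id.sub_const t))).aestronglyMeasurable)
      (Filter.Eventually.of_forall fun x => ?_)
    rw [Real.norm_eq_abs, abs_of_nonneg (mul_nonneg (hg0 x) (hg0 _))]
    exact mul_le_mul_of_nonneg_right (hCg x) (hg0 _)
  set h : ℝ → ℝ := fun t => ∫ x, g x * g (x - t) with hh
  have hh0 : ∀ t, 0 ≤ h t := fun t =>
    integral_nonneg fun x => mul_nonneg (hg0 x) (hg0 _)
  have hhub : ∀ t, h t ≤ Cg := by
    intro t
    calc h t ≤ ∫ x, Cg * g (x - t) := by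
          refine integral_mono (hprod t) ((hgint.comp_sub_right t).const_mul Cg) fun x => ?_
          exact mul_le_mul_of_nonneg_right (hCg x) (hg0 _)
      _ = Cg * ∫ x, g (x - t) := integral_const_mul Cg _
      _ = Cg := by rw [integral_sub_right_eq_self g t, hgone, mul_one]
  -- continuity of h via L¹ continuity of translation
  haveI : Fact ((1 : ENNReal) ≤ 1) := ⟨le_rfl⟩
  have hgmem : MemLp g 1 (volume : Measure ℝ) := memLp_one_iff_integrable.mpr hgint
  set G1 : Lp ℝ 1 (volume : Measure ℝ) := hgmem.toLp g with hG1
  let Φ : C(ℝ, C(ℝ, ℝ)) :=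
    (ContinuousMap.mk (fun p : ℝ × ℝ => p.2 - p.1) (by fun_prop)).curry
  have hgm : ∀ t : ℝ, MeasurePreserving (Φ t) volume volume := fun t =>
    measurePreserving_sub_right volume t
  set T : ℝ → Lp ℝ 1 (volume : Measure ℝ) :=
    fun t => Lp.compMeasurePreserving (Φ t) (hgm t) G1 with hTdef
  have hT : Continuous T :=
    Continuous.compMeasurePreservingLp continuous_const Φ.continuous hgm ENNReal.one_ne_top
  have hTae : ∀ t : ℝ, (T t : ℝ → ℝ) =ᵐ[volume] fun x => g (x - t) := by
    intro t
    refine (Lp.coeFn_compMeasurePreserving G1 (hgm t)).trans ?_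
    exact (hgmem.coeFn_toLp).comp_tendsto (hgm t).quasiMeasurePreserving.tendsto_ae
  have hkey : ∀ t s : ℝ, |h t - h s| ≤ Cg * ‖T t - T s‖ := by
    intro t s
    have hu : Integrable (fun x => (T t - T s : Lp ℝ 1 (volume : Measure ℝ)) x) :=
      L1.integrable_coeFn _
    have h1 : h t - h s = ∫ x, g x * ((T t - T s : Lp ℝ 1 (volume : Measure ℝ)) x) := by
      rw [hh, ← integral_sub (hprod t) (hprod s)]
      refine integral_congr_ae ?_
      filter_upwards [hTae t, hTae s, Lp.coeFn_sub (T t) (T s)] with x e1 e2 e3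
      rw [e3, Pi.sub_apply, e1, e2]; ring
    rw [h1]
    calc |∫ x, g x * ((T t - T s : Lp ℝ 1 (volume : Measure ℝ)) x)|
        ≤ ∫ x, ‖g x * ((T t - T s : Lp ℝ 1 (volume : Measure ℝ)) x)‖ := by
          rw [← Real.norm_eq_abs]; exact norm_integral_le_integral_norm _
      _ ≤ ∫ x, Cg * ‖(T t - T s : Lp ℝ 1 (volume : Measure ℝ)) x‖ := by
          refine integral_mono_of_nonneg (Filter.Eventually.of_forall fun x => norm_nonneg _)
            (hu.norm.const_mul Cg) (Filter.Eventually.of_forall fun x => ?_)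
          dsimp only
          rw [norm_mul]
          refine mul_le_mul_of_nonneg_right ?_ (norm_nonneg _)
          rw [Real.norm_eq_abs, abs_of_nonneg (hg0 x)]; exact hCg x
      _ = Cg * ∫ x, ‖(T t - T s : Lp ℝ 1 (volume : Measure ℝ)) x‖ := integral_const_mul Cg _
      _ = Cg * ‖T t - T s‖ := by rw [L1.norm_eq_integral_norm]
  have hcont : Continuous h := by
    refine continuous_iff_continuousAt.mpr fun s => ?_
    rw [ContinuousAt, tendsto_iff_dist_tendsto_zero]
    have h1 : Tendsto (fun t => Cg * ‖T t - T s‖) (nhds s) (nhds 0) := by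
      have hc : Continuous fun t => Cg * ‖T t - T s‖ :=
        continuous_const.mul ((hT.sub continuous_const).norm)
      simpa using hc.tendsto s
    refine squeeze_zero (fun t => dist_nonneg) (fun t => ?_) h1
    rw [Real.dist_eq]; exact hkey t s
  -- integral with respect to G as a weighted Lebesgue integral
  have hw : ∀ f : ℝ → ℝ, ∫ x, f x ∂G = ∫ x, g x * f x := by
    intro f
    rw [hG,
      show (fun x => ENNReal.ofReal (g x)) = (fun x => ((g x).toNNReal : ENNReal)) from rfl,
      integral_withDensity_eq_integral_smul hgmeas.real_toNNReal f]
    refine integral_congr_ae (Filter.Eventually.of_forall fun x => ?_)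
    simp [NNReal.smul_def, Real.coe_toNNReal _ (hg0 x)]
  -- representation of the scaled double integral for σ > 0
  have hrepr : ∀ σ : ℝ, 0 < σ →
      σ * ∫ x₁, ∫ x₂, (σ⁻¹ * φ ((x₁ - x₂) / σ)) ^ 2 ∂G ∂G
        = ∫ v, φ v ^ 2 * h (σ * v) := by
    intro σ hσ
    have hσ0 : σ ≠ 0 := ne_of_gt hσ
    have hinner : ∀ x₁ : ℝ, ∫ x₂, (σ⁻¹ * φ ((x₁ - x₂) / σ)) ^ 2 ∂G
        = σ⁻¹ * ∫ v, g (x₁ - σ * v) * φ v ^ 2 := by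
      intro x₁
      rw [hw]
      have e1 : ∫ x₂, g x₂ * (σ⁻¹ * φ ((x₁ - x₂) / σ)) ^ 2
          = ∫ y, g (x₁ - y) * (σ⁻¹ * φ (y / σ)) ^ 2 := by
        rw [← integral_sub_left_eq_self
          (fun y => g (x₁ - y) * (σ⁻¹ * φ (y / σ)) ^ 2) volume x₁]
        simp only [sub_sub_cancel]
      have e2 := MeasureTheory.Measure.integral_comp_mul_left
        (fun y => g (x₁ - y) * (σ⁻¹ * φ (y / σ)) ^ 2) σ
      simp only [smul_eq_mul, mul_div_cancel_left₀ _ hσ0,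
        abs_of_pos (inv_pos.mpr hσ)] at e2
      have e3 : ∫ x, g (x₁ - σ * x) * (σ⁻¹ * φ x) ^ 2
          = σ⁻¹ ^ 2 * ∫ v, g (x₁ - σ * v) * φ v ^ 2 := by
        rw [← integral_const_mul]
        exact integral_congr_ae (Filter.Eventually.of_forall fun x => by ring)
      rw [e1]
      have e5 : σ⁻¹ * ∫ y, g (x₁ - y) * (σ⁻¹ * φ (y / σ)) ^ 2
          = σ⁻¹ * (σ⁻¹ * ∫ v, g (x₁ - σ * v) * φ v ^ 2) := by
        rw [← e2, e3]; ring
      exact mul_left_cancel₀ (inv_ne_zero hσ0) e5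
    -- now assemble the outer integral
    have hfub : Integrable
        (Function.uncurry fun x v => g x * (g (x - σ * v) * φ v ^ 2))
        ((volume : Measure ℝ).prod volume) := by
      have hbound : Integrable (fun p : ℝ × ℝ => (Cg * g p.1) * φ p.2 ^ 2)
          ((volume : Measure ℝ).prod volume) := (hgint.const_mul Cg).mul_prod hφ2
      refine hbound.mono' ?_ (Filter.Eventually.of_forall fun p => ?_)
      · exact ((hgmeas.comp measurable_fst).mul
          ((hgmeas.comp (measurable_fst.sub (measurable_snd.const_mul σ))).mul
            ((hφmeas.comp measurable_snd).pow_const 2))).aestronglyMeasurable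
      · simp only [Function.uncurry]
        rw [Real.norm_eq_abs, abs_of_nonneg
          (mul_nonneg (hg0 _) (mul_nonneg (hg0 _) (sq_nonneg _)))]
        calc g p.1 * (g (p.1 - σ * p.2) * φ p.2 ^ 2)
            ≤ g p.1 * (Cg * φ p.2 ^ 2) := by
              exact mul_le_mul_of_nonneg_left
                (mul_le_mul_of_nonneg_right (hCg _) (sq_nonneg _)) (hg0 _)
          _ = Cg * g p.1 * φ p.2 ^ 2 := by ring
    calc σ * ∫ x₁, ∫ x₂, (σ⁻¹ * φ ((x₁ - x₂) / σ)) ^ 2 ∂G ∂G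
        = σ * ∫ x₁, g x₁ * ∫ x₂, (σ⁻¹ * φ ((x₁ - x₂) / σ)) ^ 2 ∂G := by rw [hw]
      _ = σ * ∫ x₁, σ⁻¹ * (g x₁ * ∫ v, g (x₁ - σ * v) * φ v ^ 2) := by
          congr 1
          exact integral_congr_ae (Filter.Eventually.of_forall fun x₁ => by
            dsimp only; rw [hinner x₁]; ring)
      _ = σ * (σ⁻¹ * ∫ x₁, g x₁ * ∫ v, g (x₁ - σ * v) * φ v ^ 2) := by
          rw [integral_const_mul]
      _ = ∫ x₁, g x₁ * ∫ v, g (x₁ - σ * v) * φ v ^ 2 := by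
          rw [← mul_assoc, mul_inv_cancel₀ hσ0, one_mul]
      _ = ∫ x₁, ∫ v, g x₁ * (g (x₁ - σ * v) * φ v ^ 2) := by
          exact integral_congr_ae (Filter.Eventually.of_forall fun x₁ =>
            (integral_const_mul (g x₁) _).symm)
      _ = ∫ v, ∫ x, g x * (g (x - σ * v) * φ v ^ 2) := integral_integral_swap hfub
      _ = ∫ v, φ v ^ 2 * h (σ * v) := by
          refine integral_congr_ae (Filter.Eventually.of_forall fun v => ?_)
          rw [hh]
          dsimp only
          rw [← integral_const_mul]
          exact integral_congr_ae (Filter.Eventually.of_forall fun x => by ring)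
  -- the limit of the representation
  have hmain : Tendsto (fun σ : ℝ => ∫ v, φ v ^ 2 * h (σ * v))
      (nhdsWithin 0 (Set.Ioi 0)) (nhds ((∫ x, g x ^ 2) * ∫ v, φ v ^ 2)) := by
    have h0 : h 0 = ∫ x, g x ^ 2 := by
      rw [hh]
      exact integral_congr_ae (Filter.Eventually.of_forall fun x => by
        dsimp only; rw [sub_zero, sq])
    have hdct := tendsto_integral_filter_of_dominated_convergence
      (μ := (volume : Measure ℝ)) (F := fun (σ : ℝ) (v : ℝ) => φ v ^ 2 * h (σ * v))
      (f := fun v => φ v ^ 2 * h 0) (l := nhdsWithin 0 (Set.Ioi 0))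
      (bound := fun v => Cg * φ v ^ 2)
      (Filter.Eventually.of_forall fun σ =>
        ((hφmeas.pow_const 2).mul
          (hcont.measurable.comp (measurable_id.const_mul σ))).aestronglyMeasurable)
      (Filter.Eventually.of_forall fun σ => Filter.Eventually.of_forall fun v => by
        rw [Real.norm_eq_abs, abs_of_nonneg (mul_nonneg (sq_nonneg _) (hh0 _))]
        calc φ v ^ 2 * h (σ * v) ≤ φ v ^ 2 * Cg :=
              mul_le_mul_of_nonneg_left (hhub _) (sq_nonneg _)
          _ = Cg * φ v ^ 2 := mul_comm _ _)
      (hφ2.const_mul Cg)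
      (Filter.Eventually.of_forall fun v => by
        have hmul : Tendsto (fun σ : ℝ => σ * v) (nhdsWithin 0 (Set.Ioi 0)) (nhds 0) := by
          have : Tendsto (fun σ : ℝ => σ * v) (nhds 0) (nhds 0) := by
            simpa using (continuous_mul_right v).tendsto (0 : ℝ)
          exact this.mono_left nhdsWithin_le_nhds
        exact ((hcont.tendsto 0).comp hmul).const_mul (φ v ^ 2))
    have heq : ∫ v, φ v ^ 2 * h 0 = (∫ x, g x ^ 2) * ∫ v, φ v ^ 2 := by
      rw [integral_mul_const, h0, mul_comm]
    rwa [heq] at hdct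
  refine hmain.congr' ?_
  filter_upwards [self_mem_nhdsWithin] with σ hσ
  exact (hrepr σ hσ).symm
end
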